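/- arXiv:2110.10445 — 4 statements merged into one kernel-verified Lean document; each statement's English description precedes it below -/
import Mathlib

section
/- If S ⊆ ℤ^n is an L₂-convex set, then there exist values γ_{I,J} ∈ ℤ ∪ {+∞}, indexed by pairs of disjoint subsets I, J of N = {1,…,n} with |I| = |J|, such that S = {x ∈ ℤ^n : x(J) − x(I) ≤ γ_{I,J} for all disjoint I, J ⊆ N with |I| = |J|}. -/
open Pointwise

/-- A nonempty set `S ⊆ ℤⁿ` is L-convex if it is closed under componentwise
max/min and under translation by integer multiples of the all-ones vector. -/
def IsLConvexSet {n : ℕ} (S : Set (Fin n → ℤ)) : Prop :=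
  S.Nonempty ∧
  (∀ x ∈ S, ∀ y ∈ S, x ⊔ y ∈ S ∧ x ⊓ y ∈ S) ∧
  (∀ x ∈ S, ∀ μ : ℤ, (x + fun _ => μ) ∈ S)

/-- A set is L₂-convex if it is the Minkowski sum of two L-convex sets. -/
def IsL2ConvexSet {n : ℕ} (S : Set (Fin n → ℤ)) : Prop :=
  ∃ S₁ S₂ : Set (Fin n → ℤ), IsLConvexSet S₁ ∧ IsLConvexSet S₂ ∧ S = S₁ + S₂

namespace L2Proof



variable {n : ℕ}

/-- Weight of the walk starting at `i` and visiting the vertices of `l` in order. -/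
def pathW (d : Fin n → Fin n → WithTop ℤ) : Fin n → List (Fin n) → WithTop ℤ
  | _, [] => 0
  | i, j :: l => d i j + pathW d j l

/-- Weight of a closed walk given by a nonempty list of vertices. -/
def cycW (d : Fin n → Fin n → WithTop ℤ) : List (Fin n) → WithTop ℤ
  | [] => 0
  | v :: m => pathW d v (m ++ [v])

lemma pathW_append (d : Fin n → Fin n → WithTop ℤ) (j : Fin n) :
    ∀ (l : List (Fin n)) (i : Fin n) (m : List (Fin n)),
      pathW d i (l ++ j :: m) = pathW d i (l ++ [j]) + pathW d j m := by
  intro l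
  induction l with
  | nil => intro i m; simp [pathW, add_assoc]
  | cons k t ih =>
      intro i m
      simp only [List.cons_append, pathW, List.append_eq]
      rw [ih k m, add_assoc]

lemma find_dup : ∀ (l : List (Fin n)), ¬ l.Nodup →
    ∃ (a : Fin n) (p q r : List (Fin n)), l = p ++ a :: q ++ a :: r := by
  intro l
  induction l with
  | nil => intro h; exact absurd List.nodup_nil h
  | cons x t ih =>
      intro h
      by_cases hx : x ∈ t
      · obtain ⟨q, r, rfl⟩ := List.append_of_mem hx
        exact ⟨x, [], q, r, rfl⟩
      · have ht : ¬ t.Nodup := by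
          intro hnd; exact h (List.nodup_cons.mpr ⟨hx, hnd⟩)
        obtain ⟨a, p, q, r, rfl⟩ := ih ht
        exact ⟨a, x :: p, q, r, rfl⟩

lemma cyc_decomp (d : Fin n → Fin n → WithTop ℤ) (a : Fin n) (p q r : List (Fin n)) :
    cycW d (p ++ a :: q ++ a :: r) = cycW d (a :: q) + cycW d (p ++ a :: r) := by
  cases p with
  | nil =>
      show cycW d (a :: (q ++ a :: r)) = _
      simp only [cycW, List.append_assoc, List.cons_append, List.nil_append]
      rw [pathW_append d a q a (r ++ [a])]
  | cons x p' =>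
      show cycW d (x :: (p' ++ a :: q ++ a :: r)) = _
      simp only [cycW, List.append_assoc, List.cons_append]
      rw [pathW_append d a p' x (q ++ a :: (r ++ [x])),
          pathW_append d a q a (r ++ [x]),
          pathW_append d a p' x (r ++ [x])]
      rw [add_left_comm]

lemma cycW_nonneg (d : Fin n → Fin n → WithTop ℤ)
    (Hs : ∀ c : List (Fin n), c.Nodup → 0 ≤ cycW d c) :
    ∀ c : List (Fin n), 0 ≤ cycW d c := by
  have key : ∀ (k : ℕ) (c : List (Fin n)), c.length ≤ k → 0 ≤ cycW d c := by
    intro k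
    induction k with
    | zero =>
        intro c hc
        have : c = [] := List.eq_nil_of_length_eq_zero (Nat.le_zero.mp hc)
        subst this; exact le_refl 0
    | succ k ih =>
        intro c hc
        by_cases hnd : c.Nodup
        · exact Hs c hnd
        · obtain ⟨a, p, q, r, rfl⟩ := find_dup c hnd
          rw [cyc_decomp]
          have h1 : (a :: q).length ≤ k := by
            simp only [List.length_append, List.length_cons] at hc ⊢
            omega
          have h2 : (p ++ a :: r).length ≤ k := by
            simp only [List.length_append, List.length_cons] at hc ⊢
            omega
          have := add_le_add (ih _ h1) (ih _ h2)
          simpa using this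
  intro c; exact key c.length c le_rfl

/-- Bellman–Ford iteration (virtual source connected to every vertex with weight 0). -/
def BF (d : Fin n → Fin n → WithTop ℤ) : ℕ → Fin n → WithTop ℤ
  | 0, _ => 0
  | k + 1, j => min (BF d k j) (Finset.univ.inf fun i => BF d k i + d i j)

lemma BF_nonpos (d : Fin n → Fin n → WithTop ℤ) : ∀ k j, BF d k j ≤ 0 := by
  intro k
  induction k with
  | zero => intro j; exact le_refl 0
  | succ k ih => intro j; exact le_trans (min_le_left _ _) (ih j)

lemma BF_le_pathW (d : Fin n → Fin n → WithTop ℤ) :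
    ∀ (k : ℕ) (l : List (Fin n)) (i j : Fin n), l.length + 1 ≤ k →
      BF d k j ≤ pathW d i (l ++ [j]) := by
  intro k
  induction k with
  | zero => intro l i j h; omega
  | succ k ih =>
      intro l i j h
      rcases List.eq_nil_or_concat l with rfl | ⟨l', m, rfl⟩
      · calc BF d (k+1) j ≤ _ := min_le_right _ _
          _ ≤ BF d k i + d i j := Finset.inf_le (Finset.mem_univ i)
          _ ≤ 0 + d i j := add_le_add_left (BF_nonpos d k i) _
          _ = pathW d i [j] := by simp [pathW]
      · simp only [List.concat_eq_append] at h ⊢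
        have hlen : l'.length + 1 ≤ k := by
          simp only [List.length_append, List.length_singleton] at h; omega
        calc BF d (k+1) j ≤ _ := min_le_right _ _
          _ ≤ BF d k m + d m j := Finset.inf_le (Finset.mem_univ m)
          _ ≤ pathW d i (l' ++ [m]) + d m j :=
              add_le_add_left (ih l' i m hlen) _
          _ = pathW d i ((l' ++ [m]) ++ [j]) := by
              rw [List.append_assoc]
              simp only [List.singleton_append]
              rw [pathW_append d m l' i [j]]
              simp [pathW]

lemma BF_attained (d : Fin n → Fin n → WithTop ℤ) :
    ∀ (k : ℕ) (j : Fin n), BF d k j = 0 ∨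
      ∃ (i : Fin n) (l : List (Fin n)), l.length + 1 ≤ k ∧ BF d k j = pathW d i (l ++ [j]) := by
  intro k
  induction k with
  | zero => intro j; exact Or.inl rfl
  | succ k ih =>
      intro j
      rcases min_cases (BF d k j) (Finset.univ.inf fun i => BF d k i + d i j) with
        ⟨heq, _⟩ | ⟨heq, _⟩
      · rcases ih j with h0 | ⟨i, l, hl, he⟩
        · exact Or.inl (by rw [show BF d (k+1) j = _ from heq, h0])
        · exact Or.inr ⟨i, l, by omega, by rw [show BF d (k+1) j = _ from heq, he]⟩
      · have hne : (Finset.univ : Finset (Fin n)).Nonempty := ⟨j, Finset.mem_univ j⟩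
        obtain ⟨i₀, _, hinf⟩ := Finset.exists_mem_eq_inf Finset.univ hne
          (fun i => BF d k i + d i j)
        have heq' : BF d (k+1) j = BF d k i₀ + d i₀ j := by
          rw [show BF d (k+1) j = _ from heq, hinf]
        rcases ih i₀ with h0 | ⟨i, l, hl, he⟩
        · refine Or.inr ⟨i₀, [], by simp, ?_⟩
          rw [heq', h0]; simp [pathW]
        · refine Or.inr ⟨i, l ++ [i₀], by simp; omega, ?_⟩
          rw [heq', he, List.append_assoc]
          simp only [List.singleton_append]
          rw [pathW_append d i₀ l i [j]]
          simp [pathW]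

def walkW (d : Fin n → Fin n → WithTop ℤ) : List (Fin n) → WithTop ℤ
  | [] => 0
  | v :: m => pathW d v m

lemma walk_decomp (d : Fin n → Fin n → WithTop ℤ) (a : Fin n) (p q r : List (Fin n)) :
    walkW d (p ++ a :: q ++ a :: r) = cycW d (a :: q) + walkW d (p ++ a :: r) := by
  cases p with
  | nil =>
      show walkW d (a :: (q ++ a :: r)) = _
      simp only [walkW, cycW, List.nil_append]
      rw [pathW_append d a q a r]
  | cons x p' =>
      show walkW d (x :: (p' ++ a :: q ++ a :: r)) = _
      simp only [walkW, cycW, List.cons_append, List.append_assoc]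
      rw [pathW_append d a p' x (q ++ a :: r), pathW_append d a q a r,
        pathW_append d a p' x r, add_left_comm]

lemma BF_stab (d : Fin n → Fin n → WithTop ℤ)
    (Hc : ∀ c : List (Fin n), 0 ≤ cycW d c) (j : Fin n) :
    BF d n j ≤ BF d (n + 1) j := by
  rcases BF_attained d (n + 1) j with h0 | ⟨i₀, l, hl, he⟩
  · rw [h0]; exact BF_nonpos d n j
  · by_cases hl' : l.length + 1 ≤ n
    · rw [he]; exact BF_le_pathW d n l i₀ j hl'
    · have hlen : l.length = n := by omega
      have hnodup : ¬ (i₀ :: l).Nodup := by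
        intro hnd
        have := hnd.length_le_card
        simp [hlen] at this
      obtain ⟨a, p, q, r, hF⟩ := find_dup (i₀ :: l) hnodup
      have hLsum : p.length + q.length + r.length + 2 = n + 1 := by
        have := congrArg List.length hF
        simp only [List.length_cons, List.length_append, hlen] at this
        omega
      have hkey : pathW d i₀ (l ++ [j]) =
          cycW d (a :: q) + walkW d (p ++ a :: (r ++ [j])) := by
        have h2 : (i₀ :: l) ++ [j] = p ++ a :: q ++ a :: (r ++ [j]) := by
          rw [hF]; simp [List.append_assoc]
        have h3 : walkW d ((i₀ :: l) ++ [j]) = pathW d i₀ (l ++ [j]) := rfl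
        rw [← h3, h2, walk_decomp d a p q (r ++ [j])]
      have hwalk : BF d n j ≤ walkW d (p ++ a :: (r ++ [j])) := by
        cases p with
        | nil =>
            show BF d n j ≤ walkW d (a :: (r ++ [j]))
            simp only [walkW]
            exact BF_le_pathW d n r a j (by simp at hLsum ⊢; omega)
        | cons x p' =>
            show BF d n j ≤ walkW d (x :: (p' ++ a :: (r ++ [j])))
            simp only [walkW]
            have : p' ++ a :: (r ++ [j]) = (p' ++ a :: r) ++ [j] := by
              simp [List.append_assoc]
            rw [this]
            exact BF_le_pathW d n (p' ++ a :: r) x j (by simp at hLsum ⊢; omega)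
      rw [he, hkey]
      exact le_trans hwalk (le_add_of_nonneg_left (Hc (a :: q)))

theorem diff_feasible (d : Fin n → Fin n → WithTop ℤ)
    (Hs : ∀ c : List (Fin n), c.Nodup → 0 ≤ cycW d c) :
    ∃ y : Fin n → ℤ, ∀ i j, (↑(y j) : WithTop ℤ) ≤ ↑(y i) + d i j := by
  have Hc := cycW_nonneg d Hs
  have hne : ∀ j, ∃ z : ℤ, BF d n j = (z : WithTop ℤ) := by
    intro j
    have h := BF_nonpos d n j
    cases hb : BF d n j with
    | top => rw [hb, top_le_iff] at h; exact absurd h.symm (by simp)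
    | coe z => exact ⟨z, rfl⟩
  choose y hy using hne
  refine ⟨y, fun i j => ?_⟩
  calc (↑(y j) : WithTop ℤ) = BF d n j := (hy j).symm
    _ ≤ BF d (n + 1) j := BF_stab d Hc j
    _ ≤ BF d n i + d i j := le_trans (min_le_right _ _) (Finset.inf_le (Finset.mem_univ i))
    _ = ↑(y i) + d i j := by rw [hy i]


open Classical in
/-- Supremum of a set of integers, as an element of `WithTop ℤ`. -/
noncomputable def ub (T : Set ℤ) : WithTop ℤ :=
  if BddAbove T ∧ T.Nonempty then ((sSup T : ℤ) : WithTop ℤ) else ⊤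

lemma le_ub {T : Set ℤ} {t : ℤ} (ht : t ∈ T) : (t : WithTop ℤ) ≤ ub T := by
  unfold ub; split_ifs with h
  · exact_mod_cast le_csSup h.1 ht
  · exact le_top

lemma exists_ge_of_le_ub {T : Set ℤ} (hT : T.Nonempty) {v : ℤ}
    (hv : (v : WithTop ℤ) ≤ ub T) : ∃ t ∈ T, v ≤ t := by
  unfold ub at hv; split_ifs at hv with h
  · exact ⟨sSup T, Int.csSup_mem h.2 h.1, by exact_mod_cast hv⟩
  · have hb : ¬ BddAbove T := fun hb => h ⟨hb, hT⟩
    obtain ⟨t, ht, hvt⟩ := (not_bddAbove_iff.mp hb) v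
    exact ⟨t, ht, le_of_lt hvt⟩

lemma ub_le {T : Set ℤ} (hT : T.Nonempty) {W : WithTop ℤ}
    (h : ∀ t ∈ T, (t : WithTop ℤ) ≤ W) : ub T ≤ W := by
  cases W with
  | top => exact le_top
  | coe m =>
      have hb : BddAbove T := ⟨m, fun t ht => by exact_mod_cast h t ht⟩
      unfold ub; rw [if_pos ⟨hb, hT⟩]
      exact_mod_cast csSup_le hT (fun t ht => by exact_mod_cast h t ht)

theorem lconvex_mem {S : Set (Fin n → ℤ)} (hS : IsLConvexSet S) (x : Fin n → ℤ)
    (hx : ∀ i j : Fin n, ((x j - x i : ℤ) : WithTop ℤ) ≤ ub ((fun w => w j - w i) '' S)) :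
    x ∈ S := by
  obtain ⟨⟨s₀, hs₀⟩, hsup, htr⟩ := hS
  rcases Nat.eq_zero_or_pos n with hn | hn
  · subst hn
    have hxs : x = s₀ := funext fun i => i.elim0
    rwa [hxs]
  · haveI : Nonempty (Fin n) := ⟨⟨0, hn⟩⟩
    have hz : ∀ i j : Fin n, ∃ z ∈ S, x j - x i ≤ z j - z i := by
      intro i j
      obtain ⟨t, ⟨z, hzS, rfl⟩, hvt⟩ :=
        exists_ge_of_le_ub (T := (fun w => w j - w i) '' S)
          ⟨s₀ j - s₀ i, ⟨s₀, hs₀, rfl⟩⟩ (hx i j)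
      exact ⟨z, hzS, hvt⟩
    choose z hzS hzle using hz
    set w : Fin n → Fin n → (Fin n → ℤ) :=
      fun i j => z i j + fun _ => (x j - z i j j) with hw
    have hwS : ∀ i j, w i j ∈ S := fun i j => htr _ (hzS i j) _
    have hwj : ∀ i j, w i j j = x j := by intro i j; simp [hw]
    have hwk : ∀ i j, w i j i ≤ x i := by
      intro i j
      have := hzle i j
      simp only [hw, Pi.add_apply]
      omega
    set y : Fin n → (Fin n → ℤ) :=
      fun j => Finset.univ.inf' Finset.univ_nonempty (fun i => w i j) with hy
    have hyS : ∀ j, y j ∈ S :=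
      fun j => Finset.inf'_mem S (fun a ha b hb => (hsup a ha b hb).2) _ _ _
        (fun i _ => hwS i j)
    have hyk : ∀ j k, y j k ≤ x k := by
      intro j k
      have h1 : y j k = Finset.univ.inf' Finset.univ_nonempty (fun i => w i j k) := by
        rw [hy]; exact Finset.inf'_apply _ _ _
      rw [h1]
      exact le_trans (Finset.inf'_le _ (Finset.mem_univ k)) (hwk k j)
    have hyj : ∀ j, y j j = x j := by
      intro j
      refine le_antisymm (hyk j j) ?_
      have h1 : y j j = Finset.univ.inf' Finset.univ_nonempty (fun i => w i j j) := by
        rw [hy]; exact Finset.inf'_apply _ _ _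
      rw [h1]
      exact Finset.le_inf' _ _ (fun i _ => (hwj i j).ge)
    have hx_eq : x = Finset.univ.sup' Finset.univ_nonempty y := by
      funext k
      rw [Finset.sup'_apply]
      refine le_antisymm ?_ (Finset.sup'_le _ _ (fun j _ => hyk j k))
      exact (hyj k).ge.trans (Finset.le_sup' (fun a => y a k) (Finset.mem_univ k))
    rw [hx_eq]
    exact Finset.sup'_mem S (fun a ha b hb => (hsup a ha b hb).1) _ _ _
      (fun j _ => hyS j)


lemma coe_sub_le {u v : ℤ} {W : WithTop ℤ} (h : (u : WithTop ℤ) ≤ W + ↑v) :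
    ((u - v : ℤ) : WithTop ℤ) ≤ W := by
  cases W with
  | top => exact le_top
  | coe m =>
      rw [← WithTop.coe_add] at h
      exact WithTop.coe_le_coe.mpr (by have := WithTop.coe_le_coe.mp h; linarith)
lemma list_toFinset_map {α β : Type*} [DecidableEq α] [DecidableEq β]
    (l : List α) (f : α → β) : (l.map f).toFinset = l.toFinset.image f := by
  induction l with
  | nil => simp
  | cons x t ih => simp [ih]

lemma pathW_zip (d : Fin n → Fin n → WithTop ℤ) :
    ∀ (l : List (Fin n)) (i j : Fin n),
      pathW d i (l ++ [j]) = (((i :: l).zip (l ++ [j])).map fun e => d e.1 e.2).sum := by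
  intro l
  induction l with
  | nil => intro i j; simp [pathW]
  | cons k t ih =>
      intro i j
      simp only [List.cons_append, List.zip_cons_cons, List.map_cons, List.sum_cons, pathW,
        List.append_eq]
      rw [ih k j]

lemma aux_nonneg {W : WithTop ℤ} {u : ℤ} (h : ((-u : ℤ) : WithTop ℤ) ≤ W) :
    0 ≤ W + (u : WithTop ℤ) := by
  cases W with
  | top => simp
  | coe m =>
      rw [← WithTop.coe_add]
      have hm := WithTop.coe_le_coe.mp h
      exact_mod_cast (by linarith : (0:ℤ) ≤ m + u)

lemma cycle_nonneg {S₁ S₂ : Set (Fin n → ℤ)} (h₁ : IsLConvexSet S₁) (h₂ : IsLConvexSet S₂)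
    (x : Fin n → ℤ) (a b d : Fin n → Fin n → WithTop ℤ)
    (haub : ∀ i j, a i j = ub ((fun w => w j - w i) '' S₁))
    (hbub : ∀ i j, b i j = ub ((fun w => w j - w i) '' S₂))
    (hd : ∀ i j, d i j = min (a i j) (b j i + ((x j - x i : ℤ) : WithTop ℤ)))
    (hx : ∀ I J : Finset (Fin n), Disjoint I J → I.card = J.card →
      (((∑ j ∈ J, x j) - ∑ i ∈ I, x i : ℤ) : WithTop ℤ) ≤
        ub ((fun w => (∑ j ∈ J, w j) - ∑ i ∈ I, w i) '' (S₁ + S₂)))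
    (c : List (Fin n)) (hnd : c.Nodup) : 0 ≤ cycW d c := by
  classical
  cases c with
  | nil => simp [cycW]
  | cons v l =>
    set E := (v :: l).zip (l ++ [v]) with hE
    have hlen : (v :: l).length = (l ++ [v]).length := by simp
    have hfst : E.map Prod.fst = v :: l := List.map_fst_zip (le_of_eq hlen)
    have hsnd : E.map Prod.snd = l ++ [v] := List.map_snd_zip (le_of_eq hlen.symm)
    have hndE : E.Nodup := List.Nodup.of_map Prod.fst (by rw [hfst]; exact hnd)
    have hnd2 : (l ++ [v]).Nodup := ((List.perm_append_singleton v l).nodup_iff).mpr hnd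
    set EF := E.toFinset with hEF
    have hcyc : cycW d (v :: l) = ∑ e ∈ EF, d e.1 e.2 := by
      show pathW d v (l ++ [v]) = _
      rw [pathW_zip d l v v, ← hE]
      exact (List.sum_toFinset _ hndE).symm
    have hinjF : ∀ e ∈ EF, ∀ f ∈ EF, e.1 = f.1 → e = f := by
      intro e he f hf hef
      exact List.inj_on_of_nodup_map (f := Prod.fst) (l := E) (by rw [hfst]; exact hnd)
        (List.mem_toFinset.mp he) (List.mem_toFinset.mp hf) hef
    have hinjS : ∀ e ∈ EF, ∀ f ∈ EF, e.2 = f.2 → e = f := by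
      intro e he f hf hef
      exact List.inj_on_of_nodup_map (f := Prod.snd) (l := E) (by rw [hsnd]; exact hnd2)
        (List.mem_toFinset.mp he) (List.mem_toFinset.mp hf) hef
    have himgF : EF.image Prod.fst = (v :: l).toFinset := by
      rw [hEF, ← list_toFinset_map, hfst]
    have himgS : EF.image Prod.snd = (l ++ [v]).toFinset := by
      rw [hEF, ← list_toFinset_map, hsnd]
    have himg_eq : EF.image Prod.snd = EF.image Prod.fst := by
      rw [himgF, himgS]
      ext a
      simp only [List.mem_toFinset, List.mem_append, List.mem_cons, List.mem_singleton]
      tauto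
    set P : Fin n × Fin n → Prop :=
      fun e => a e.1 e.2 ≤ b e.2 e.1 + ((x e.2 - x e.1 : ℤ) : WithTop ℤ) with hP
    set EA := EF.filter P with hEA
    set EB := EF.filter (fun e => ¬ P e) with hEB
    have hEAsub : EA ⊆ EF := Finset.filter_subset _ _
    have hEBsub : EB ⊆ EF := Finset.filter_subset _ _
    have hsplit : ∑ e ∈ EF, d e.1 e.2 = ∑ e ∈ EA, d e.1 e.2 + ∑ e ∈ EB, d e.1 e.2 :=
      (Finset.sum_filter_add_sum_filter_not EF P _).symm
    have hdA : ∑ e ∈ EA, d e.1 e.2 = ∑ e ∈ EA, a e.1 e.2 :=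
      Finset.sum_congr rfl fun e he => by
        rw [hd]; exact min_eq_left (Finset.mem_filter.mp he).2
    have hdB : ∑ e ∈ EB, d e.1 e.2
        = ∑ e ∈ EB, b e.2 e.1 + ((∑ e ∈ EB, (x e.2 - x e.1) : ℤ) : WithTop ℤ) := by
      rw [WithTop.coe_sum, ← Finset.sum_add_distrib]
      exact Finset.sum_congr rfl fun e he => by
        rw [hd]; exact min_eq_right (le_of_not_ge (Finset.mem_filter.mp he).2)
    set Ix := EB.image Prod.fst with hIx
    set Jx := EB.image Prod.snd with hJx
    have hsumIx : ∀ g : Fin n → ℤ, ∑ i ∈ Ix, g i = ∑ e ∈ EB, g e.1 := fun g =>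
      Finset.sum_image fun e he f hf => hinjF e (hEBsub he) f (hEBsub hf)
    have hsumJx : ∀ g : Fin n → ℤ, ∑ j ∈ Jx, g j = ∑ e ∈ EB, g e.2 := fun g =>
      Finset.sum_image fun e he f hf => hinjS e (hEBsub he) f (hEBsub hf)
    have hcardIx : Ix.card = EB.card :=
      Finset.card_image_of_injOn fun e he f hf =>
        hinjF e (hEBsub (Finset.mem_coe.mp he)) f (hEBsub (Finset.mem_coe.mp hf))
    have hcardJx : Jx.card = EB.card :=
      Finset.card_image_of_injOn fun e he f hf =>
        hinjS e (hEBsub (Finset.mem_coe.mp he)) f (hEBsub (Finset.mem_coe.mp hf))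
    set I' := Ix \ Jx with hI'
    set J' := Jx \ Ix with hJ'
    have hdisj : Disjoint J' I' := disjoint_sdiff_sdiff
    have hcard' : J'.card = I'.card := by
      have h1 := Finset.card_sdiff_add_card_inter Jx Ix
      have h2 := Finset.card_sdiff_add_card_inter Ix Jx
      rw [Finset.inter_comm] at h2
      rw [← hI'] at h2
      rw [← hJ'] at h1
      omega
    have hswap : ∀ g : Fin n → ℤ,
        (∑ j ∈ Jx, g j) - ∑ i ∈ Ix, g i = (∑ j ∈ J', g j) - ∑ i ∈ I', g i := by
      intro g
      have h1 := Finset.sum_inter_add_sum_sdiff Jx Ix g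
      have h2 := Finset.sum_inter_add_sum_sdiff Ix Jx g
      rw [Finset.inter_comm] at h2
      rw [← hI'] at h2
      rw [← hJ'] at h1
      linarith
    have htel : ∀ g : Fin n → ℤ, ∑ e ∈ EF, (g e.2 - g e.1) = 0 := by
      intro g
      rw [Finset.sum_sub_distrib]
      have hA : ∑ e ∈ EF, g e.2 = ∑ i ∈ EF.image Prod.snd, g i :=
        (Finset.sum_image fun e he f hf => hinjS e he f hf).symm
      have hB : ∑ e ∈ EF, g e.1 = ∑ i ∈ EF.image Prod.fst, g i :=
        (Finset.sum_image fun e he f hf => hinjF e he f hf).symm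
      rw [hA, hB, himg_eq, sub_self]
    have hsplitg : ∀ g : Fin n → ℤ,
        ∑ e ∈ EA, (g e.2 - g e.1) = ∑ e ∈ EB, (g e.1 - g e.2) := by
      intro g
      have h0 := Finset.sum_filter_add_sum_filter_not EF P (fun e => g e.2 - g e.1)
      rw [htel g] at h0
      have h1 : ∑ e ∈ EA, (g e.2 - g e.1) = - ∑ e ∈ EB, (g e.2 - g e.1) := by
        rw [hEA, hEB]; linarith [h0]
      rw [h1, ← Finset.sum_neg_distrib]
      exact Finset.sum_congr rfl fun e _ => by ring
    -- the upper bound on the γ value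
    obtain ⟨y₀, hy₀⟩ := h₁.1
    obtain ⟨z₀, hz₀⟩ := h₂.1
    have hγ := hx J' I' hdisj hcard'
    have hub : ub ((fun w => (∑ j ∈ I', w j) - ∑ i ∈ J', w i) '' (S₁ + S₂)) ≤
        ∑ e ∈ EA, a e.1 e.2 + ∑ e ∈ EB, b e.2 e.1 := by
      apply ub_le (Set.Nonempty.image _ ⟨y₀ + z₀, Set.add_mem_add hy₀ hz₀⟩)
      rintro t ⟨w, hw, rfl⟩
      obtain ⟨y, hy, z, hz, rfl⟩ := Set.mem_add.mp hw
      dsimp only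
      have e1 : (∑ j ∈ I', (y + z) j) - ∑ i ∈ J', (y + z) i
          = (∑ e ∈ EA, (y e.2 - y e.1)) + ∑ e ∈ EB, (z e.1 - z e.2) := by
        have hs1 := hswap (y + z)
        have hIyz : ∑ i ∈ Ix, (y + z) i = ∑ e ∈ EB, (y e.1 + z e.1) := by
          rw [hsumIx (y + z)]; rfl
        have hJyz : ∑ j ∈ Jx, (y + z) j = ∑ e ∈ EB, (y e.2 + z e.2) := by
          rw [hsumJx (y + z)]; rfl
        have hsy := hsplitg y
        have h3 : ∑ e ∈ EB, (y e.1 + z e.1) = ∑ e ∈ EB, y e.1 + ∑ e ∈ EB, z e.1 :=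
          Finset.sum_add_distrib
        have h4 : ∑ e ∈ EB, (y e.2 + z e.2) = ∑ e ∈ EB, y e.2 + ∑ e ∈ EB, z e.2 :=
          Finset.sum_add_distrib
        have h5 : ∑ e ∈ EA, (y e.2 - y e.1) = ∑ e ∈ EA, y e.2 - ∑ e ∈ EA, y e.1 :=
          Finset.sum_sub_distrib _ _
        have h6 : ∑ e ∈ EB, (y e.1 - y e.2) = ∑ e ∈ EB, y e.1 - ∑ e ∈ EB, y e.2 :=
          Finset.sum_sub_distrib _ _
        have h7 : ∑ e ∈ EB, (z e.1 - z e.2) = ∑ e ∈ EB, z e.1 - ∑ e ∈ EB, z e.2 :=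
          Finset.sum_sub_distrib _ _
        linarith
      rw [e1, WithTop.coe_add]
      apply add_le_add
      · rw [WithTop.coe_sum]
        apply Finset.sum_le_sum
        intro e he
        rw [haub]
        exact le_ub ⟨y, hy, rfl⟩
      · rw [WithTop.coe_sum]
        apply Finset.sum_le_sum
        intro e he
        rw [hbub]
        exact le_ub ⟨z, hz, rfl⟩
    have hxEB : ∑ e ∈ EB, (x e.2 - x e.1) = (∑ j ∈ J', x j) - ∑ i ∈ I', x i := by
      have h1 := hsumIx x
      have h2 := hsumJx x
      have h3 := hswap x
      have h4 : ∑ e ∈ EB, (x e.2 - x e.1) = ∑ e ∈ EB, x e.2 - ∑ e ∈ EB, x e.1 :=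
        Finset.sum_sub_distrib _ _
      linarith
    rw [hcyc, hsplit, hdA, hdB, hxEB, ← add_assoc]
    refine aux_nonneg ?_
    rw [neg_sub]
    exact le_trans hγ hub

end L2Proof

/-- Polyhedral description of an L₂-convex set: there are bounds
`γ I J ∈ ℤ ∪ {+∞}` for disjoint `I J` with `|I| = |J|` such that
`S = {x : x(J) - x(I) ≤ γ I J for all such I, J}`. -/
theorem polyhedral_description_of_L2_convex_set {n : ℕ} (S : Set (Fin n → ℤ))
    (hS : IsL2ConvexSet S) :
    ∃ γ : Finset (Fin n) → Finset (Fin n) → WithTop ℤ,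
      S = {x : Fin n → ℤ | ∀ I J : Finset (Fin n), Disjoint I J → I.card = J.card →
        (((∑ j ∈ J, x j) - ∑ i ∈ I, x i : ℤ) : WithTop ℤ) ≤ γ I J} := by
  obtain ⟨S₁, S₂, h₁, h₂, hSeq⟩ := hS
  refine ⟨fun I J => L2Proof.ub ((fun w => (∑ j ∈ J, w j) - ∑ i ∈ I, w i) '' S), ?_⟩
  ext x
  simp only [Set.mem_setOf_eq]
  constructor
  · intro hx I J _ _
    exact L2Proof.le_ub ⟨x, hx, rfl⟩
  · intro hx
    rw [hSeq] at hx ⊢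
    set a : Fin n → Fin n → WithTop ℤ :=
      fun i j => L2Proof.ub ((fun w => w j - w i) '' S₁) with ha
    set b : Fin n → Fin n → WithTop ℤ :=
      fun i j => L2Proof.ub ((fun w => w j - w i) '' S₂) with hb
    set d : Fin n → Fin n → WithTop ℤ :=
      fun i j => min (a i j) (b j i + ((x j - x i : ℤ) : WithTop ℤ)) with hd
    have Hs : ∀ c : List (Fin n), c.Nodup → 0 ≤ L2Proof.cycW d c := fun c hc =>
      L2Proof.cycle_nonneg h₁ h₂ x a b d (fun _ _ => rfl) (fun _ _ => rfl)
        (fun _ _ => rfl) hx c hc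
    obtain ⟨y, hy⟩ := L2Proof.diff_feasible d Hs
    have hyd : ∀ i j, ((y j - y i : ℤ) : WithTop ℤ) ≤ d i j := by
      intro i j
      have h := hy i j
      rw [add_comm] at h
      exact L2Proof.coe_sub_le h
    have hy1 : y ∈ S₁ :=
      L2Proof.lconvex_mem h₁ y (fun i j => le_trans (hyd i j) (min_le_left _ _))
    have hy2 : x - y ∈ S₂ := by
      apply L2Proof.lconvex_mem h₂ (x - y)
      intro i j
      have h : ((y i - y j : ℤ) : WithTop ℤ) ≤ b i j + ((x i - x j : ℤ) : WithTop ℤ) :=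
        le_trans (hyd j i) (min_le_right _ _)
      have h2 := L2Proof.coe_sub_le h
      have h3 : (x - y) j - (x - y) i = (y i - y j) - (x i - x j) := by
        simp only [Pi.sub_apply]; ring
      rw [h3]
      exact h2
    have hxy : x = y + (x - y) := by ring
    rw [hxy]
    exact Set.add_mem_add hy1 hy2
end

section
/- If P ⊆ ℝ^n is an L₂-convex polyhedron, then there exist values γ_{I,J} ∈ ℝ ∪ {+∞}, indexed by pairs of disjoint subsets I, J of N = {1,…,n} with |I| = |J|, such that P = {x ∈ ℝ^n : x(J) − x(I) ≤ γ_{I,J} for all disjoint I, J ⊆ N with |I| = |J|}. -/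
open Pointwise

/-- A polyhedron in `ℝⁿ` is the solution set of a finite system of linear
inequalities. -/
def IsPolyhedron {n : ℕ} (P : Set (Fin n → ℝ)) : Prop :=
  ∃ (m : ℕ) (A : Fin m → Fin n → ℝ) (b : Fin m → ℝ),
    P = {x | ∀ i, ∑ j, A i j * x j ≤ b i}

/-- A nonempty polyhedron `P ⊆ ℝⁿ` is L-convex if it is closed under
componentwise max/min and under translation by real multiples of `𝟏`. -/
def IsLConvexPoly {n : ℕ} (P : Set (Fin n → ℝ)) : Prop :=
  IsPolyhedron P ∧ P.Nonempty ∧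
  (∀ x ∈ P, ∀ y ∈ P, x ⊔ y ∈ P ∧ x ⊓ y ∈ P) ∧
  (∀ x ∈ P, ∀ μ : ℝ, (x + fun _ => μ) ∈ P)

/-- A polyhedron is L₂-convex if it is the Minkowski sum of two L-convex
polyhedra. -/
def IsL2ConvexPoly {n : ℕ} (P : Set (Fin n → ℝ)) : Prop :=
  IsPolyhedron P ∧
  ∃ P₁ P₂ : Set (Fin n → ℝ), IsLConvexPoly P₁ ∧ IsLConvexPoly P₂ ∧ P = P₁ + P₂

set_option linter.unusedSectionVars false

namespace L2Aux

variable {V : Type*} [DecidableEq V] [Fintype V]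

/-- Weight of a walk given arc weights. -/
def wt (C : V × V → ℝ) (l : List V) : ℝ := ((l.zip l.tail).map C).sum

lemma wt_nil (C : V × V → ℝ) : wt C ([] : List V) = 0 := rfl

lemma wt_single (C : V × V → ℝ) (a : V) : wt C [a] = 0 := rfl

lemma wt_cons_cons (C : V × V → ℝ) (a b : V) (t : List V) :
    wt C (a :: b :: t) = C (a, b) + wt C (b :: t) := by
  simp [wt]

lemma wt_append (C : V × V → ℝ) (X : List V) (v : V) (B : List V) :
    wt C (X ++ v :: B) = wt C (X ++ [v]) + wt C (v :: B) := by
  induction X with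
  | nil => simp [wt_single]
  | cons a X ih =>
    cases X with
    | nil => simp [wt_cons_cons, wt_single]
    | cons a' X' =>
      simp only [List.cons_append, wt_cons_cons] at *
      rw [ih]; ring

lemma wt_concat (C : V × V → ℝ) (l : List V) (h : l ≠ []) (b : V) :
    wt C (l ++ [b]) = wt C l + C (l.getLast h, b) := by
  conv_lhs => rw [← List.dropLast_append_getLast h]
  rw [List.append_assoc, List.singleton_append, wt_append,
    List.dropLast_append_getLast h, wt_cons_cons, wt_single]
  ring

lemma exists_dup_split {l : List V} (h : ¬ l.Nodup) :
    ∃ (X : List V) (v : V) (Y Z : List V), l = X ++ v :: Y ++ v :: Z := by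
  induction l with
  | nil => simp at h
  | cons a t ih =>
    by_cases ha : a ∈ t
    · obtain ⟨Y, Z, rfl⟩ := List.append_of_mem ha
      exact ⟨[], a, Y, Z, rfl⟩
    · have : ¬ t.Nodup := fun hn => h (List.nodup_cons.2 ⟨ha, hn⟩)
      obtain ⟨X, v, Y, Z, rfl⟩ := ih this
      exact ⟨a :: X, v, Y, Z, rfl⟩

variable {E : Finset (V × V)} {C : V × V → ℝ}

/-- The adjacency relation of the arc set `E`. -/
def adj (E : Finset (V × V)) (a b : V) : Prop := (a, b) ∈ E

/-- Every closed walk has nonnegative weight if every simple closed walk does. -/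
lemma closed_walk_nonneg
    (H : ∀ l : List V, l.Chain' (adj E) → l.head? = l.getLast? → 2 ≤ l.length →
      l.dropLast.Nodup → 0 ≤ wt C l) :
    ∀ l : List V, l.Chain' (adj E) → l.head? = l.getLast? → 2 ≤ l.length → 0 ≤ wt C l := by
  suffices key : ∀ m, ∀ l : List V, l.length = m → l.Chain' (adj E) → l.head? = l.getLast? →
      2 ≤ l.length → 0 ≤ wt C l by
    exact fun l => key l.length l rfl
  intro m
  induction m using Nat.strong_induction_on with
  | _ m ih =>
  intro l hm hch hcl hlen
  by_cases hnd : l.dropLast.Nodup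
  · exact H l hch hcl hlen hnd
  · obtain ⟨X, v, Y, Z, hsplit⟩ := exists_dup_split hnd
    have hlne : l ≠ [] := by
      intro h; rw [h] at hlen; simp at hlen
    set h := l.getLast hlne with hh
    have hl : l = X ++ v :: Y ++ v :: (Z ++ [h]) := by
      conv_lhs => rw [← List.dropLast_append_getLast hlne]
      rw [hsplit]; simp [hh]
    have hl1 : l = X ++ ((v :: Y ++ [v]) ++ (Z ++ [h])) := by rw [hl]; simp
    have hl2 : l = (X ++ v :: Y) ++ (v :: (Z ++ [h])) := by rw [hl]
    -- the inner closed walk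
    have hc1 : (v :: Y ++ [v]).Chain' (adj E) := by
      apply hch.infix
      exact ⟨X, Z ++ [h], by rw [hl1]; simp⟩
    have hw1 : 0 ≤ wt C (v :: Y ++ [v]) := by
      have hclosed1 : (v :: Y ++ [v] : List V).head? = (v :: Y ++ [v]).getLast? := by
        rw [show (v :: Y ++ [v] : List V) = (v :: Y) ++ [v] by simp, List.getLast?_concat]
        simp
      apply ih (v :: Y ++ [v]).length ?_ _ rfl hc1 hclosed1 (by simp)
      · rw [← hm]
        have := congrArg List.length hl
        simp at this ⊢
        omega
    -- the outer closed walk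
    have hcsuf : (v :: (Z ++ [h])).Chain' (adj E) := hch.suffix ⟨X ++ v :: Y, by rw [hl2]⟩
    have hcX : (X ++ [v]).Chain' (adj E) := hch.prefix ⟨Y ++ v :: (Z ++ [h]), by rw [hl]; simp⟩
    have hc2 : (X ++ v :: (Z ++ [h])).Chain' (adj E) := by
      apply List.isChain_append.2
      refine ⟨(List.isChain_append.1 hcX).1, hcsuf, ?_⟩
      intro x hx y hy
      simp only [List.head?_cons, Option.mem_def, Option.some.injEq] at hy
      subst hy
      exact (List.isChain_append.1 hcX).2.2 x hx v (by simp)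
    have hhead : l.head? = some h := by rw [hcl]; exact List.getLast?_eq_getLast hlne ▸ rfl
    have hch2 : (X ++ v :: (Z ++ [h])).head? = some h := by
      cases X with
      | nil => simp only [List.nil_append] at hl ⊢; rw [hl] at hhead; simpa using hhead
      | cons a X' => rw [hl] at hhead; simpa using hhead
    have hcl2 : (X ++ v :: (Z ++ [h])).head? = (X ++ v :: (Z ++ [h])).getLast? := by
      rw [hch2]
      rw [show X ++ v :: (Z ++ [h]) = (X ++ v :: Z) ++ [h] by simp, List.getLast?_concat]
    have hw2 : 0 ≤ wt C (X ++ v :: (Z ++ [h])) := by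
      apply ih (X ++ v :: (Z ++ [h])).length ?_ _ rfl hc2 hcl2 (by simp; omega)
      · rw [← hm]
        have := congrArg List.length hl
        simp at this ⊢
        omega
    have hsum : wt C l = wt C (v :: Y ++ [v]) + wt C (X ++ v :: (Z ++ [h])) := by
      have e1 : l = X ++ v :: (Y ++ v :: (Z ++ [h])) := by rw [hl]; simp
      rw [e1, wt_append C X v (Y ++ v :: (Z ++ [h]))]
      rw [show (v :: (Y ++ v :: (Z ++ [h])) : List V) = (v :: Y) ++ v :: (Z ++ [h]) by simp]
      rw [wt_append C (v :: Y) v (Z ++ [h])]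
      rw [wt_append C X v (Z ++ [h])]
      simp only [List.cons_append]
      ring
    rw [hsum]
    linarith


/-- Every walk can be shortened to a duplicate-free walk of no larger weight,
assuming all simple closed walks have nonnegative weight. -/
lemma exists_nodup_walk_le
    (H : ∀ l : List V, l.Chain' (adj E) → l.head? = l.getLast? → 2 ≤ l.length →
      l.dropLast.Nodup → 0 ≤ wt C l) :
    ∀ l : List V, l.Chain' (adj E) →
      ∃ l' : List V, l'.Chain' (adj E) ∧ l'.Nodup ∧ wt C l' ≤ wt C l := by
  suffices key : ∀ m, ∀ l : List V, l.length = m → l.Chain' (adj E) →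
      ∃ l' : List V, l'.Chain' (adj E) ∧ l'.Nodup ∧ wt C l' ≤ wt C l by
    exact fun l => key l.length l rfl
  intro m
  induction m using Nat.strong_induction_on with
  | _ m ih =>
  intro l hm hch
  by_cases hnd : l.Nodup
  · exact ⟨l, hch, hnd, le_refl _⟩
  · obtain ⟨X, v, Y, Z, hl⟩ := exists_dup_split hnd
    have hl1 : l = X ++ ((v :: Y ++ [v]) ++ Z) := by rw [hl]; simp
    have hc1 : (v :: Y ++ [v]).Chain' (adj E) := hch.infix ⟨X, Z, by rw [hl1]; simp [List.append_assoc]⟩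
    have hclosed1 : (v :: Y ++ [v] : List V).head? = (v :: Y ++ [v]).getLast? := by
      rw [show (v :: Y ++ [v] : List V) = (v :: Y) ++ [v] by simp, List.getLast?_concat]
      simp
    have hw1 : 0 ≤ wt C (v :: Y ++ [v]) :=
      closed_walk_nonneg H _ hc1 hclosed1 (by simp)
    -- the shortened walk
    have hcsuf : (v :: Z).Chain' (adj E) := hch.suffix ⟨X ++ v :: Y, by rw [hl]⟩
    have hcX : (X ++ [v]).Chain' (adj E) := hch.prefix ⟨Y ++ v :: Z, by rw [hl]; simp⟩
    have hc2 : (X ++ v :: Z).Chain' (adj E) := by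
      apply List.isChain_append.2
      refine ⟨(List.isChain_append.1 hcX).1, hcsuf, ?_⟩
      intro x hx y hy
      simp only [List.head?_cons, Option.mem_def, Option.some.injEq] at hy
      subst hy
      exact (List.isChain_append.1 hcX).2.2 x hx v (by simp)
    have hwsum : wt C l = wt C (v :: Y ++ [v]) + wt C (X ++ v :: Z) - wt C [v] - wt C (v :: Z)
        + wt C (v :: Z) - 0 := by
      have e1 : l = X ++ v :: (Y ++ v :: Z) := by rw [hl]; simp
      rw [e1, wt_append C X v (Y ++ v :: Z)]
      rw [show (v :: (Y ++ v :: Z) : List V) = (v :: Y) ++ v :: Z by simp]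
      rw [wt_append C (v :: Y) v Z, wt_append C X v Z]
      simp only [List.cons_append, wt_single]
      ring
    have hlt : (X ++ v :: Z).length < m := by
      rw [← hm]
      have := congrArg List.length hl
      simp at this ⊢
      omega
    obtain ⟨l', hch', hnd', hle'⟩ := ih _ hlt (X ++ v :: Z) rfl hc2
    refine ⟨l', hch', hnd', ?_⟩
    rw [hwsum]
    simp only [wt_single]
    linarith

/-- Lower bound for weights of walks, in terms of `B`. -/
lemma wt_ge_of_chain (B : ℝ) (hB : 0 ≤ B) (hC : ∀ e ∈ E, -B ≤ C e) :
    ∀ l : List V, l.Chain' (adj E) → -((l.length : ℝ) * B) ≤ wt C l := by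
  intro l
  induction l with
  | nil => intro _; simp [wt_nil]
  | cons a t iht =>
    intro hch
    cases t with
    | nil => simp [wt_single]; positivity
    | cons b t' =>
      have h1 : adj E a b := (List.isChain_cons_cons.1 hch).1
      have h2 := iht (List.isChain_cons_cons.1 hch).2
      rw [wt_cons_cons]
      have := hC (a, b) h1
      simp only [List.length_cons] at h2 ⊢
      push_cast
      push_cast at h2
      nlinarith

/-- If every simple closed walk has nonnegative weight, the difference constraint
system `p b - p a ≤ C (a, b)`, `(a, b) ∈ E`, is feasible. -/
lemma feasible_of_no_negcycle
    (H : ∀ l : List V, l.Chain' (adj E) → l.head? = l.getLast? → 2 ≤ l.length →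
      l.dropLast.Nodup → 0 ≤ wt C l) :
    ∃ p : V → ℝ, ∀ e ∈ E, p e.2 - p e.1 ≤ C e := by
  classical
  set B : ℝ := ∑ e ∈ E, |C e| with hBdef
  have hB : 0 ≤ B := Finset.sum_nonneg fun e _ => abs_nonneg _
  have hCB : ∀ e ∈ E, -B ≤ C e := by
    intro e he
    have h2 : |C e| ≤ B := Finset.single_le_sum (fun e _ => abs_nonneg (C e)) he
    have := neg_abs_le (C e)
    linarith
  set LB : ℝ := -((Fintype.card V : ℝ) * B) with hLBdef
  have hwalk : ∀ l : List V, l.Chain' (adj E) → LB ≤ wt C l := by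
    intro l hch
    obtain ⟨l', hch', hnd', hle'⟩ := exists_nodup_walk_le H l hch
    have h1 := wt_ge_of_chain B hB hCB l' hch'
    have h2 : (l'.length : ℝ) ≤ (Fintype.card V : ℝ) := by
      exact_mod_cast hnd'.length_le_card
    have : -((Fintype.card V : ℝ) * B) ≤ -((l'.length : ℝ) * B) := by nlinarith
    rw [hLBdef]
    linarith
  set S : V → Set ℝ := fun v => wt C '' {l : List V | l.Chain' (adj E) ∧ l ≠ [] ∧
    l.getLast? = some v} with hSdef
  have hSne : ∀ v, (S v).Nonempty := by
    intro v
    exact ⟨wt C [v], ⟨[v], ⟨List.isChain_singleton v, by simp, by simp⟩, rfl⟩⟩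
  have hSbb : ∀ v, BddBelow (S v) := by
    intro v
    refine ⟨LB, ?_⟩
    rintro x ⟨l, ⟨hch, _, _⟩, rfl⟩
    exact hwalk l hch
  refine ⟨fun v => sInf (S v), ?_⟩
  rintro ⟨a, b⟩ he
  rw [sub_le_iff_le_add]
  have : sInf (S b) - C (a, b) ≤ sInf (S a) := by
    apply le_csInf (hSne a)
    rintro x ⟨l, ⟨hch, hlne, hlast⟩, rfl⟩
    have hch' : (l ++ [b]).Chain' (adj E) := by
      apply List.isChain_append.2
      refine ⟨hch, List.isChain_singleton b, ?_⟩
      intro x hx y hy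
      simp only [List.head?_cons, Option.mem_def, Option.some.injEq] at hy
      subst hy
      rw [hlast] at hx
      simp only [Option.mem_def, Option.some.injEq] at hx
      subst hx
      exact he
    have hwa : wt C (l ++ [b]) = wt C l + C (a, b) := by
      rw [wt_concat C l hlne b]
      have : l.getLast hlne = a := by
        have := List.getLast?_eq_getLast hlne
        rw [hlast] at this
        exact (Option.some.injEq _ _ ▸ this.symm : _)
      rw [this]
    have hmem : wt C (l ++ [b]) ∈ S b :=
      ⟨l ++ [b], ⟨hch', by simp, List.getLast?_concat⟩, rfl⟩
    have := csInf_le (hSbb b) hmem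
    linarith
  simp only [Prod.fst, Prod.snd]
  linarith


/-- From a list of arcs whose tails are distinct and whose heads are distinct,
the sum of the "conditional difference" functionals is of the form
`x(J) - x(I)` with `I`, `J` disjoint of equal cardinality. -/
lemma extract_IJ (cond : V × V → Prop) [DecidablePred cond] :
    ∀ L : List (V × V), (L.map Prod.fst).Nodup → (L.map Prod.snd).Nodup →
      ∃ I J : Finset V, Disjoint I J ∧ I.card = J.card ∧
        (↑J ⊆ {v | ∃ e ∈ L, e.1 = v}) ∧ (↑I ⊆ {v | ∃ e ∈ L, e.2 = v}) ∧
        ∀ x : V → ℝ,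
          (L.map (fun e => if cond e then x e.1 - x e.2 else 0)).sum
            = (∑ j ∈ J, x j) - ∑ i ∈ I, x i := by
  intro L
  induction L with
  | nil =>
    intro _ _
    exact ⟨∅, ∅, by simp, by simp, by simp, by simp, by simp⟩
  | cons e L ih =>
    intro hf hs
    simp only [List.map_cons, List.nodup_cons] at hf hs
    obtain ⟨I, J, hdisj, hcard, hJsub, hIsub, hsum⟩ := ih hf.2 hs.2
    have haJ : e.1 ∉ J := fun h => hf.1 (by simpa using hJsub h)
    have hbI : e.2 ∉ I := fun h => hs.1 (by simpa using hIsub h)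
    have hJsub' : (↑J : Set V) ⊆ {v | ∃ e' ∈ e :: L, e'.1 = v} := fun v hv => by
      obtain ⟨e', he', h⟩ := hJsub hv; exact ⟨e', List.mem_cons_of_mem _ he', h⟩
    have hIsub' : (↑I : Set V) ⊆ {v | ∃ e' ∈ e :: L, e'.2 = v} := fun v hv => by
      obtain ⟨e', he', h⟩ := hIsub hv; exact ⟨e', List.mem_cons_of_mem _ he', h⟩
    by_cases hc : cond e
    · by_cases hab : e.1 = e.2
      · refine ⟨I, J, hdisj, hcard, hJsub', hIsub', fun x => ?_⟩
        simp only [List.map_cons, List.sum_cons, if_pos hc, hab, hsum x]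
        ring
      · by_cases haI : e.1 ∈ I
        · by_cases hbJ : e.2 ∈ J
          · -- remove e.1 from I and e.2 from J
            refine ⟨I.erase e.1, J.erase e.2, ?_, ?_, ?_, ?_, fun x => ?_⟩
            · exact hdisj.mono (Finset.erase_subset _ _) (Finset.erase_subset _ _)
            · rw [Finset.card_erase_of_mem haI, Finset.card_erase_of_mem hbJ, hcard]
            · exact fun v hv => hJsub' (by
                have := Finset.erase_subset e.2 J
                exact_mod_cast Finset.coe_subset.2 this hv)
            · exact fun v hv => hIsub' (by
                have := Finset.erase_subset e.1 I
                exact_mod_cast Finset.coe_subset.2 this hv)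
            · have e1 := Finset.sum_erase_add I x haI
              have e2 := Finset.sum_erase_add J x hbJ
              simp only [List.map_cons, List.sum_cons, if_pos hc, hsum x]
              linarith
          · -- remove e.1 from I, add e.2 to I
            refine ⟨insert e.2 (I.erase e.1), J, ?_, ?_, hJsub', ?_, fun x => ?_⟩
            · refine Finset.disjoint_left.2 ?_
              intro v hv hvJ
              rcases Finset.mem_insert.1 hv with h | h
              · exact hbJ (h ▸ hvJ)
              · exact (Finset.disjoint_left.1 hdisj) (Finset.erase_subset _ _ h) hvJ
            · rw [Finset.card_insert_of_notMem (fun h => hbI (Finset.erase_subset _ _ h)),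
                Finset.card_erase_of_mem haI, hcard]
              have : 1 ≤ J.card := by
                rw [← hcard]
                exact Nat.one_le_iff_ne_zero.2 (fun h => by
                  simp [Finset.card_eq_zero.1 h] at haI)
              omega
            · intro v hv
              simp only [Finset.coe_insert, Set.mem_insert_iff] at hv
              rcases hv with rfl | hv
              · exact ⟨e, List.mem_cons_self, rfl⟩
              · exact hIsub' (by
                  have := Finset.erase_subset e.1 I
                  exact_mod_cast Finset.coe_subset.2 this hv)
            · have e1 := Finset.sum_erase_add I x haI
              have e2 : ∑ v ∈ insert e.2 (I.erase e.1), x v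
                  = x e.2 + ∑ v ∈ I.erase e.1, x v := by
                rw [Finset.sum_insert (fun h => hbI (Finset.erase_subset _ _ h))]
              simp only [List.map_cons, List.sum_cons, if_pos hc, hsum x]
              linarith
        · by_cases hbJ : e.2 ∈ J
          · -- remove e.2 from J, add e.1 to J
            refine ⟨I, insert e.1 (J.erase e.2), ?_, ?_, ?_, hIsub', fun x => ?_⟩
            · refine Finset.disjoint_right.2 ?_
              intro v hv hvI
              rcases Finset.mem_insert.1 hv with h | h
              · exact haI (h ▸ hvI)
              · exact (Finset.disjoint_left.1 hdisj) hvI (Finset.erase_subset _ _ h)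
            · rw [Finset.card_insert_of_notMem (fun h => haJ (Finset.erase_subset _ _ h)),
                Finset.card_erase_of_mem hbJ, hcard]
              have : 1 ≤ J.card := Nat.one_le_iff_ne_zero.2 (fun h => by
                simp [Finset.card_eq_zero.1 h] at hbJ)
              omega
            · intro v hv
              simp only [Finset.coe_insert, Set.mem_insert_iff] at hv
              rcases hv with rfl | hv
              · exact ⟨e, List.mem_cons_self, rfl⟩
              · exact hJsub' (by
                  have := Finset.erase_subset e.2 J
                  exact_mod_cast Finset.coe_subset.2 this hv)
            · have e2 := Finset.sum_erase_add J x hbJ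
              have e1 : ∑ v ∈ insert e.1 (J.erase e.2), x v
                  = x e.1 + ∑ v ∈ J.erase e.2, x v := by
                rw [Finset.sum_insert (fun h => haJ (Finset.erase_subset _ _ h))]
              simp only [List.map_cons, List.sum_cons, if_pos hc, hsum x]
              linarith
          · -- add e.1 to J, e.2 to I
            refine ⟨insert e.2 I, insert e.1 J, ?_, ?_, ?_, ?_, fun x => ?_⟩
            · refine Finset.disjoint_left.2 ?_
              intro v hv hvJ
              rcases Finset.mem_insert.1 hv with rfl | h
              · rcases Finset.mem_insert.1 hvJ with h' | h'
                · exact hab h'.symm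
                · exact hbJ h'
              · rcases Finset.mem_insert.1 hvJ with rfl | h'
                · exact haI h
                · exact (Finset.disjoint_left.1 hdisj) h h'
            · rw [Finset.card_insert_of_notMem hbI, Finset.card_insert_of_notMem haJ, hcard]
            · intro v hv
              simp only [Finset.coe_insert, Set.mem_insert_iff] at hv
              rcases hv with rfl | hv
              · exact ⟨e, List.mem_cons_self, rfl⟩
              · exact hJsub' hv
            · intro v hv
              simp only [Finset.coe_insert, Set.mem_insert_iff] at hv
              rcases hv with rfl | hv
              · exact ⟨e, List.mem_cons_self, rfl⟩
              · exact hIsub' hv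
            · rw [Finset.sum_insert hbI, Finset.sum_insert haJ]
              simp only [List.map_cons, List.sum_cons, if_pos hc, hsum x]
              ring
    · refine ⟨I, J, hdisj, hcard, hJsub', hIsub', fun x => ?_⟩
      simp only [List.map_cons, List.sum_cons, if_neg hc, hsum x]
      ring

/-- Telescoping sum around a walk. -/
lemma telescope (p : V → ℝ) :
    ∀ (l : List V) (h : l ≠ []),
      ((l.zip l.tail).map (fun e => p e.2 - p e.1)).sum = p (l.getLast h) - p (l.head h) := by
  intro l
  induction l with
  | nil => intro h; exact absurd rfl h
  | cons a t ih =>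
    intro _
    cases t with
    | nil => simp
    | cons b t' =>
      have := ih (by simp)
      simp only [List.zip_cons_cons, List.tail_cons, List.map_cons, List.sum_cons] at this ⊢
      rw [this]
      simp [List.getLast_cons]
      try ring

/-- Arcs of a walk lie in `E`. -/
lemma arcs_mem {l : List V} (h : l.Chain' (adj E)) :
    ∀ e ∈ l.zip l.tail, e ∈ E := by
  induction l with
  | nil => simp
  | cons a t ih =>
    cases t with
    | nil => simp
    | cons b t' =>
      intro e he
      simp only [List.zip_cons_cons, List.tail_cons, List.mem_cons] at he
      rcases he with rfl | he
      · exact (List.isChain_cons_cons.1 h).1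
      · exact ih (List.isChain_cons_cons.1 h).2 e he

lemma map_fst_zip_tail (l : List V) : (l.zip l.tail).map Prod.fst = l.dropLast := by
  induction l with
  | nil => simp
  | cons a t ih =>
    cases t with
    | nil => simp
    | cons b t' =>
      simp only [List.zip_cons_cons, List.tail_cons, List.map_cons] at ih ⊢
      rw [ih]
      simp [List.dropLast]

lemma map_snd_zip_tail (l : List V) : (l.zip l.tail).map Prod.snd = l.tail := by
  induction l with
  | nil => simp
  | cons a t ih =>
    cases t with
    | nil => simp
    | cons b t' =>
      simp only [List.zip_cons_cons, List.tail_cons, List.map_cons] at ih ⊢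
      rw [ih]

/-- list sum of pointwise difference -/
lemma sum_map_sub {α : Type*} (f g : α → ℝ) :
    ∀ L : List α, (L.map (fun e => f e - g e)).sum = (L.map f).sum - (L.map g).sum := by
  intro L
  induction L with
  | nil => simp
  | cons a t ih => simp [ih]; ring


end L2Aux

namespace L2Aux

lemma isClosed_of_isPolyhedron {n : ℕ} {Q : Set (Fin n → ℝ)} (h : IsPolyhedron Q) :
    IsClosed Q := by
  obtain ⟨m, A, b, rfl⟩ := h
  have : {x : Fin n → ℝ | ∀ i, ∑ j, A i j * x j ≤ b i}
      = ⋂ i, {x : Fin n → ℝ | ∑ j, A i j * x j ≤ b i} := by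
    ext x; simp
  rw [this]
  refine isClosed_iInter fun i => ?_
  exact isClosed_le (by continuity) continuous_const

lemma inf'_mem {n : ℕ} {Q : Set (Fin n → ℝ)}
    (hQ : ∀ x ∈ Q, ∀ y ∈ Q, x ⊓ y ∈ Q) {ι : Type*} [DecidableEq ι] (s : Finset ι)
    (hs : s.Nonempty) (f : ι → Fin n → ℝ) (hf : ∀ i ∈ s, f i ∈ Q) : s.inf' hs f ∈ Q := by
  revert hf
  induction hs using Finset.Nonempty.cons_induction with
  | singleton a => intro hf; simpa using hf a (by simp)
  | cons a s ha hs ih =>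
    intro hf
    rw [Finset.inf'_cons (H := hs)]
    exact hQ _ (hf a (by simp)) _ (ih (fun i hi => hf i (by simp [hi])))

lemma sup'_mem {n : ℕ} {Q : Set (Fin n → ℝ)}
    (hQ : ∀ x ∈ Q, ∀ y ∈ Q, x ⊔ y ∈ Q) {ι : Type*} [DecidableEq ι] (s : Finset ι)
    (hs : s.Nonempty) (f : ι → Fin n → ℝ) (hf : ∀ i ∈ s, f i ∈ Q) : s.sup' hs f ∈ Q := by
  revert hf
  induction hs using Finset.Nonempty.cons_induction with
  | singleton a => intro hf; simpa using hf a (by simp)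
  | cons a s ha hs ih =>
    intro hf
    rw [Finset.sup'_cons (H := hs)]
    exact hQ _ (hf a (by simp)) _ (ih (fun i hi => hf i (by simp [hi])))

/-- Membership criterion for an L-convex polyhedron: if for every ordered pair `(i, j)` and
every `ε > 0` there is a point of `Q` whose `j`–`i` difference nearly dominates that of `y`,
then `y ∈ Q`. -/
lemma mem_of_pairwise_approx {n : ℕ} {Q : Set (Fin n → ℝ)} (hQ : IsLConvexPoly Q)
    (y : Fin n → ℝ)
    (hy : ∀ i j : Fin n, ∀ ε : ℝ, 0 < ε → ∃ w ∈ Q, y j - y i - ε ≤ w j - w i) :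
    y ∈ Q := by
  obtain ⟨hpoly, hne, hlat, htr⟩ := hQ
  rcases Nat.eq_zero_or_pos n with hn | hn
  · obtain ⟨x₀, hx₀⟩ := hne
    subst hn
    have : y = x₀ := by funext i; exact absurd i.2 (by omega)
    rwa [this]
  haveI : NeZero n := ⟨by omega⟩
  have hclosed := isClosed_of_isPolyhedron hpoly
  rw [← hclosed.closure_eq]
  rw [Metric.mem_closure_iff]
  intro ε hε
  -- construct z ∈ Q with y ≤ z ≤ y + ε/2
  set δ : ℝ := ε / 2 with hδ
  have hδpos : 0 < δ := by positivity
  have hchoice : ∀ k j : Fin n, ∃ w, w ∈ Q ∧ y j - y k - δ ≤ w j - w k := by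
    intro k j
    obtain ⟨w, hw, hwle⟩ := hy k j δ hδpos
    exact ⟨w, hw, hwle⟩
  choose w hwQ hwle using hchoice
  -- translate: w' k j has value y j at coordinate j
  set w' : Fin n → Fin n → (Fin n → ℝ) :=
    fun k j => w k j + fun _ => (y j - w k j j) with hw'
  have hw'Q : ∀ k j, w' k j ∈ Q := fun k j => htr _ (hwQ k j) _
  have hw'j : ∀ k j, w' k j j = y j := by intro k j; simp [hw']
  have hw'k : ∀ k j, w' k j k ≤ y k + δ := by
    intro k j
    have := hwle k j
    simp only [hw', Pi.add_apply]
    have : w k j k - w k j j ≤ y k - y j + δ := by linarith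
    linarith
  set s : Fin n → (Fin n → ℝ) :=
    fun j => Finset.univ.inf' Finset.univ_nonempty (fun k => w' k j) with hs
  have hsQ : ∀ j, s j ∈ Q :=
    fun j => inf'_mem (fun x hx y hy => (hlat x hx y hy).2) _ _ _ (fun k _ => hw'Q k j)
  have hsj : ∀ j, s j j = y j := by
    intro j
    have h1 : s j j = Finset.univ.inf' Finset.univ_nonempty (fun k => w' k j j) :=
      Finset.inf'_apply _ _ _
    rw [h1]
    have h2 : Finset.univ.inf' Finset.univ_nonempty (fun k : Fin n => w' k j j)
        = Finset.univ.inf' Finset.univ_nonempty (fun _ : Fin n => y j) :=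
      Finset.inf'_congr _ rfl (fun k _ => hw'j k j)
    rw [h2, Finset.inf'_const]
  have hsk : ∀ j k, s j k ≤ y k + δ := by
    intro j k
    have h1 : s j k = Finset.univ.inf' Finset.univ_nonempty (fun k' => w' k' j k) :=
      Finset.inf'_apply _ _ _
    rw [h1]
    exact le_trans (Finset.inf'_le (fun k' => w' k' j k) (Finset.mem_univ k)) (hw'k k j)
  set z : Fin n → ℝ :=
    Finset.univ.sup' Finset.univ_nonempty s with hz
  have hzQ : z ∈ Q :=
    sup'_mem (fun x hx y hy => (hlat x hx y hy).1) _ _ _ (fun j _ => hsQ j)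
  have hzle : ∀ k, y k ≤ z k ∧ z k ≤ y k + δ := by
    intro k
    constructor
    · rw [hz, Finset.sup'_apply]
      have := Finset.le_sup' (fun j => s j k) (Finset.mem_univ k)
      rw [hsj k] at this
      exact this
    · rw [hz, Finset.sup'_apply]
      exact Finset.sup'_le _ _ fun j _ => hsk j k
  refine ⟨z, hzQ, ?_⟩
  have : dist y z ≤ δ := by
    rw [dist_pi_le_iff hδpos.le]
    intro k
    rw [Real.dist_eq, abs_le]
    constructor <;> [linarith [(hzle k).2]; linarith [(hzle k).1]]
  calc dist y z ≤ δ := this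
    _ < ε := by rw [hδ]; linarith


lemma tail_nodup_of_closed {V : Type*} [DecidableEq V] {l : List V}
    (hlen : 2 ≤ l.length) (hcl : l.head? = l.getLast?) (hnd : l.dropLast.Nodup) :
    l.tail.Nodup := by
  cases l with
  | nil => simp
  | cons a t =>
    have htne : t ≠ [] := by
      intro h; subst h; simp at hlen
    have hlast : t.getLast htne = a := by
      have h1 : (a :: t).getLast? = t.getLast? := by
        cases t with
        | nil => exact absurd rfl htne
        | cons b tt => exact List.getLast?_cons_cons
      rw [h1] at hcl
      have h2 := List.getLast?_eq_getLast htne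
      rw [h2] at hcl
      simp only [List.head?_cons, Option.some.injEq] at hcl
      exact hcl.symm
    have hdl : (a :: t).dropLast = a :: t.dropLast := List.dropLast_cons_of_ne_nil htne
    rw [hdl, List.nodup_cons] at hnd
    have hperm : (t.dropLast ++ [a]).Perm (a :: t.dropLast) := List.perm_append_singleton a _
    have : t = t.dropLast ++ [a] := by
      conv_lhs => rw [← List.dropLast_append_getLast htne]
      rw [hlast]
    rw [List.tail_cons, this]
    exact hperm.nodup_iff.2 (List.nodup_cons.2 hnd)

end L2Aux

/-- Polyhedral description of an L₂-convex polyhedron: there are bounds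
`γ I J ∈ ℝ ∪ {+∞}` for disjoint `I J` with `|I| = |J|` such that
`P = {x : x(J) - x(I) ≤ γ I J for all such I, J}`. -/
theorem polyhedral_description_of_L2_convex_polyhedron {n : ℕ} (P : Set (Fin n → ℝ))
    (hP : IsL2ConvexPoly P) :
    ∃ γ : Finset (Fin n) → Finset (Fin n) → WithTop ℝ,
      P = {x : Fin n → ℝ | ∀ I J : Finset (Fin n), Disjoint I J → I.card = J.card →
        (((∑ j ∈ J, x j) - ∑ i ∈ I, x i : ℝ) : WithTop ℝ) ≤ γ I J} := by
  classical
  obtain ⟨hPoly, P₁, P₂, h₁, h₂, hPsum⟩ := hP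
  set val : Finset (Fin n) → Finset (Fin n) → (Fin n → ℝ) → ℝ :=
    fun I J x => (∑ j ∈ J, x j) - ∑ i ∈ I, x i with hvaldef
  refine ⟨fun I J => if BddAbove (val I J '' P) then ((sSup (val I J '' P) : ℝ) : WithTop ℝ)
    else ⊤, ?_⟩
  have hPne : P.Nonempty := by
    obtain ⟨p₀, hp₀⟩ := h₁.2.1
    obtain ⟨q₀, hq₀⟩ := h₂.2.1
    exact ⟨p₀ + q₀, hPsum ▸ Set.add_mem_add hp₀ hq₀⟩
  apply Set.Subset.antisymm
  · -- easy direction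
    intro x hx I J hIJ hcard
    show _ ≤ if BddAbove (val I J '' P) then ((sSup (val I J '' P) : ℝ) : WithTop ℝ) else ⊤
    by_cases hbdd : BddAbove (val I J '' P)
    · rw [if_pos hbdd]
      exact_mod_cast WithTop.coe_le_coe.2 (le_csSup hbdd ⟨x, hx, rfl⟩)
    · rw [if_neg hbdd]
      exact le_top
  · intro y hy
    simp only [Set.mem_setOf_eq] at hy
    -- set up the arc system
    set img1 : Fin n × Fin n → Set ℝ := fun e => (fun x => x e.2 - x e.1) '' P₁ with himg1
    set img2 : Fin n × Fin n → Set ℝ := fun e => (fun x => x e.1 - x e.2) '' P₂ with himg2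
    have himg1ne : ∀ e, (img1 e).Nonempty := fun e => h₁.2.1.image _
    have himg2ne : ∀ e, (img2 e).Nonempty := fun e => h₂.2.1.image _
    set E₁ : Finset (Fin n × Fin n) := Finset.univ.filter (fun e => BddAbove (img1 e)) with hE₁
    set E₂ : Finset (Fin n × Fin n) := Finset.univ.filter (fun e => BddAbove (img2 e)) with hE₂
    set E : Finset (Fin n × Fin n) := E₁ ∪ E₂ with hE
    set C₁ : Fin n × Fin n → ℝ := fun e => sSup (img1 e) with hC₁
    set C₂ : Fin n × Fin n → ℝ := fun e => sSup (img2 e) + y e.2 - y e.1 with hC₂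
    set cond : Fin n × Fin n → Prop := fun e => e ∈ E₂ ∧ (e ∉ E₁ ∨ C₂ e ≤ C₁ e) with hcond
    set C : Fin n × Fin n → ℝ := fun e => if cond e then C₂ e else C₁ e with hC
    set cc : Fin n × Fin n → ℝ := fun e => if cond e then sSup (img2 e) else C₁ e with hcc
    have hCle1 : ∀ e ∈ E₁, C e ≤ C₁ e := by
      intro e he
      by_cases hc : cond e
      · rw [hC]; simp only [if_pos hc]
        rcases hc.2 with h | h
        · exact absurd he h
        · exact h
      · rw [hC]; simp only [if_neg hc]
        exact le_refl _
    have hCle2 : ∀ e ∈ E₂, C e ≤ C₂ e := by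
      intro e he
      by_cases hc : cond e
      · rw [hC]; simp only [if_pos hc]
        exact le_refl _
      · rw [hC]; simp only [if_neg hc]
        have h' : ¬(e ∉ E₁ ∨ C₂ e ≤ C₁ e) := fun hor => hc ⟨he, hor⟩
        push_neg at h'
        exact le_of_lt h'.2
    -- uniform per-arc inequality
    have harc : ∀ e ∈ E, ∀ p ∈ P₁, ∀ q ∈ P₂,
        p e.2 - p e.1 ≤ cc e - (if cond e then (p + q) e.1 - (p + q) e.2 else 0) := by
      intro e he p hp q hq
      by_cases hc : cond e
      · have he2 : e ∈ E₂ := hc.1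
        have hbdd2 : BddAbove (img2 e) := by
          rw [hE₂] at he2
          exact (Finset.mem_filter.1 he2).2
        have hq2 : q e.1 - q e.2 ≤ sSup (img2 e) := le_csSup hbdd2 ⟨q, hq, rfl⟩
        rw [hcc]
        simp only [if_pos hc, Pi.add_apply]
        linarith
      · have he1 : e ∈ E₁ := by
          rcases Finset.mem_union.1 he with h | h
          · exact h
          · by_contra h1
            exact hc ⟨h, Or.inl h1⟩
        have hbdd1 : BddAbove (img1 e) := by
          rw [hE₁] at he1
          exact (Finset.mem_filter.1 he1).2
        have hp1 : p e.2 - p e.1 ≤ sSup (img1 e) := le_csSup hbdd1 ⟨p, hp, rfl⟩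
        rw [hcc]
        simp only [if_neg hc]
        rw [hC₁]
        linarith
    have hCeq : ∀ e, C e = cc e - (if cond e then y e.1 - y e.2 else 0) := by
      intro e
      by_cases hc : cond e
      · rw [hC, hcc]
        simp only [if_pos hc]
        rw [hC₂]
        ring
      · rw [hC, hcc]
        simp only [if_neg hc]
        ring
    by_cases hneg : ∀ l : List (Fin n), l.Chain' (L2Aux.adj E) → l.head? = l.getLast? →
        2 ≤ l.length → l.dropLast.Nodup → 0 ≤ L2Aux.wt C l
    · -- no negative cycle: the difference system is feasible and y ∈ P₁ + P₂
      obtain ⟨p, hp⟩ := L2Aux.feasible_of_no_negcycle hneg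
      have hp1 : p ∈ P₁ := by
        apply L2Aux.mem_of_pairwise_approx h₁
        intro i j ε hε
        by_cases hb : BddAbove (img1 (i, j))
        · have he1 : (i, j) ∈ E₁ := by
            rw [hE₁]; exact Finset.mem_filter.2 ⟨Finset.mem_univ _, hb⟩
          have hpe := hp (i, j) (Finset.mem_union_left _ he1)
          have hple : p j - p i ≤ sSup (img1 (i, j)) := le_trans hpe (hCle1 _ he1)
          obtain ⟨v, hv, hvlt⟩ := exists_lt_of_lt_csSup (himg1ne (i, j))
            (show sSup (img1 (i, j)) - ε < sSup (img1 (i, j)) by linarith)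
          obtain ⟨w, hw, rfl⟩ := hv
          exact ⟨w, hw, by simp only [] at hvlt ⊢; linarith⟩
        · obtain ⟨v, hv, hvlt⟩ := (not_bddAbove_iff.1 hb) (p j - p i - ε)
          obtain ⟨w, hw, rfl⟩ := hv
          exact ⟨w, hw, le_of_lt hvlt⟩
      have hq2 : y - p ∈ P₂ := by
        apply L2Aux.mem_of_pairwise_approx h₂
        intro i j ε hε
        by_cases hb : BddAbove (img2 (j, i))
        · have he2 : (j, i) ∈ E₂ := by
            rw [hE₂]; exact Finset.mem_filter.2 ⟨Finset.mem_univ _, hb⟩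
          have hpe := hp (j, i) (Finset.mem_union_right _ he2)
          have hple : p i - p j ≤ C₂ (j, i) := le_trans hpe (hCle2 _ he2)
          have hqle : (y - p) j - (y - p) i ≤ sSup (img2 (j, i)) := by
            rw [hC₂] at hple
            simp only [Pi.sub_apply] at *
            linarith
          obtain ⟨v, hv, hvlt⟩ := exists_lt_of_lt_csSup (himg2ne (j, i))
            (show sSup (img2 (j, i)) - ε < sSup (img2 (j, i)) by linarith)
          obtain ⟨w, hw, rfl⟩ := hv
          exact ⟨w, hw, by simp only [] at hvlt ⊢; linarith⟩
        · obtain ⟨v, hv, hvlt⟩ := (not_bddAbove_iff.1 hb) ((y - p) j - (y - p) i - ε)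
          obtain ⟨w, hw, rfl⟩ := hv
          exact ⟨w, hw, le_of_lt hvlt⟩
      rw [hPsum]
      refine Set.mem_add.2 ⟨p, hp1, y - p, hq2, ?_⟩
      funext i
      simp
    · -- a negative simple closed walk exists
      exfalso
      push_neg at hneg
      obtain ⟨l, hch, hcl, hlen, hnd, hwneg⟩ := hneg
      have hlne : l ≠ [] := by
        intro h; rw [h] at hlen; simp at hlen
      set L : List (Fin n × Fin n) := l.zip l.tail with hL
      have hfst : (L.map Prod.fst).Nodup := by
        rw [hL, L2Aux.map_fst_zip_tail]; exact hnd
      have hsnd : (L.map Prod.snd).Nodup := by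
        rw [hL, L2Aux.map_snd_zip_tail]
        exact L2Aux.tail_nodup_of_closed hlen hcl hnd
      have hmemE : ∀ e ∈ L, e ∈ E := L2Aux.arcs_mem hch
      obtain ⟨I, J, hdisj, hcard, _, _, hfun⟩ := L2Aux.extract_IJ cond L hfst hsnd
      set K : ℝ := (L.map cc).sum with hK
      -- every point of P satisfies val I J x ≤ K
      have hbound : ∀ x ∈ P, val I J x ≤ K := by
        intro x hx
        rw [hPsum] at hx
        obtain ⟨p, hpmem, q, hqmem, rfl⟩ := Set.mem_add.1 hx
        have htel : ((L.map (fun e => p e.2 - p e.1))).sum = 0 := by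
          have := L2Aux.telescope p l hlne
          have hhead : l.head hlne = l.getLast hlne := by
            have h1 := List.head?_eq_head (l := l) hlne
            have h2 := List.getLast?_eq_getLast hlne
            rw [h1, h2] at hcl
            exact Option.some.injEq _ _ ▸ hcl
          rw [hL, this, hhead]
          ring
        have hle : ((L.map (fun e => p e.2 - p e.1))).sum
            ≤ ((L.map (fun e => cc e - (if cond e then (p + q) e.1 - (p + q) e.2 else 0)))).sum :=
          List.sum_le_sum (fun e he => harc e (hmemE e he) p hpmem q hqmem)
        have hsub := L2Aux.sum_map_sub cc
          (fun e => if cond e then (p + q) e.1 - (p + q) e.2 else 0) L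
        rw [htel] at hle
        rw [hsub] at hle
        rw [hfun (p + q)] at hle
        rw [hvaldef]
        simp only []
        rw [hK]
        linarith
      -- but y violates the inequality
      have hyviol : K < val I J y := by
        have hwt : L2Aux.wt C l = (L.map C).sum := rfl
        have hCsum : (L.map C).sum
            = K - ((L.map (fun e => if cond e then y e.1 - y e.2 else 0))).sum := by
          rw [hK, ← L2Aux.sum_map_sub cc (fun e => if cond e then y e.1 - y e.2 else 0) L]
          congr 1
          exact List.map_congr_left (fun e _ => hCeq e)
        rw [hwt, hCsum, hfun y] at hwneg
        rw [hvaldef]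
        simp only []
        linarith
      have hbddIJ : BddAbove (val I J '' P) := by
        refine ⟨K, ?_⟩
        rintro v ⟨x, hx, rfl⟩
        exact hbound x hx
      have hsupK : sSup (val I J '' P) ≤ K := csSup_le (hPne.image _) (by
        rintro v ⟨x, hx, rfl⟩
        exact hbound x hx)
      have hyle := hy I J hdisj hcard
      rw [if_pos hbddIJ] at hyle
      have : ((∑ j ∈ J, y j) - ∑ i ∈ I, y i : ℝ) ≤ sSup (val I J '' P) := by
        exact_mod_cast hyle
      have hv : val I J y = (∑ j ∈ J, y j) - ∑ i ∈ I, y i := rfl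
      rw [hv] at hyviol
      linarith
end

section
/- If S ⊆ ℤ^n is an L₂♮-convex set, then there exist values γ_{I,J} ∈ ℤ ∪ {+∞}, indexed by pairs of disjoint subsets I, J of N = {1,…,n} with |I| − |J| ∈ {−1, 0, 1}, such that S = {x ∈ ℤ^n : x(J) − x(I) ≤ γ_{I,J} for all disjoint I, J ⊆ N with |I| − |J| ∈ {−1, 0, 1}}. -/
open Pointwise

/-- A nonempty set `S ⊆ ℤⁿ` is L♮-convex if it is the intersection of an
L-convex set `T ⊆ ℤ^{n+1}` with the coordinate hyperplane "last coordinate 0". -/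
def IsLNatConvexSet {n : ℕ} (S : Set (Fin n → ℤ)) : Prop :=
  S.Nonempty ∧
  ∃ T : Set (Fin (n + 1) → ℤ), IsLConvexSet T ∧
    S = {x : Fin n → ℤ | Fin.snoc x (0 : ℤ) ∈ T}

/-- A set is L₂♮-convex if it is the Minkowski sum of two L♮-convex sets. -/
def IsL2NatConvexSet {n : ℕ} (S : Set (Fin n → ℤ)) : Prop :=
  ∃ S₁ S₂ : Set (Fin n → ℤ), IsLNatConvexSet S₁ ∧ IsLNatConvexSet S₂ ∧ S = S₁ + S₂

open Classical in
noncomputable def lub (A : Set ℤ) : WithTop ℤ :=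
  if h : (∃ b : ℤ, ∀ a ∈ A, a ≤ b) ∧ A.Nonempty then
    ((Int.exists_least_of_bdd (P := fun b => ∀ a ∈ A, a ≤ b)
      ⟨h.2.choose, fun z hz => hz _ h.2.choose_spec⟩ h.1).choose : ℤ)
  else ⊤

open Classical in
lemma le_lub {A : Set ℤ} {a : ℤ} (ha : a ∈ A) : (a : WithTop ℤ) ≤ lub A := by
  rw [lub]; split_ifs with h
  · have := (Int.exists_least_of_bdd (P := fun b => ∀ a ∈ A, a ≤ b)
      ⟨h.2.choose, fun z hz => hz _ h.2.choose_spec⟩ h.1).choose_spec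
    exact_mod_cast this.1 a ha
  · exact le_top

open Classical in
lemma lub_le {A : Set ℤ} (hA : A.Nonempty) {b : ℤ} (hb : ∀ a ∈ A, a ≤ b) :
    lub A ≤ (b : WithTop ℤ) := by
  rw [lub]; split_ifs with h
  · have := (Int.exists_least_of_bdd (P := fun b => ∀ a ∈ A, a ≤ b)
      ⟨h.2.choose, fun z hz => hz _ h.2.choose_spec⟩ h.1).choose_spec
    exact_mod_cast this.2 b hb
  · exact absurd ⟨⟨b, hb⟩, hA⟩ h

/-- Membership criterion for an L♮-convex set. -/
lemma mem_of_forall_exists {n : ℕ} {S : Set (Fin n → ℤ)} (hS : IsLNatConvexSet S)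
    (y : Fin n → ℤ)
    (h : ∀ i j : Fin (n + 1), ∃ z ∈ S,
      (Fin.snoc y (0:ℤ) : Fin (n+1) → ℤ) j - (Fin.snoc y (0:ℤ) : Fin (n+1) → ℤ) i ≤
        (Fin.snoc z (0:ℤ) : Fin (n+1) → ℤ) j - (Fin.snoc z (0:ℤ) : Fin (n+1) → ℤ) i) :
    y ∈ S := by
  classical
  obtain ⟨hne, T, ⟨hTne, hTmm, hTtr⟩, hST⟩ := hS
  set yh : Fin (n+1) → ℤ := Fin.snoc y 0 with hyh
  -- the set of translates of snoc-points
  set T' : Set (Fin (n+1) → ℤ) :=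
    {w | ∃ z ∈ S, ∃ μ : ℤ, w = Fin.snoc z (0:ℤ) + fun _ => μ} with hT'
  have hT'T : T' ⊆ T := by
    rintro w ⟨z, hz, μ, rfl⟩
    exact hTtr _ (by rw [hST] at hz; exact hz) μ
  have hmemT' : ∀ w, w ∈ T → (w (Fin.last n) = 0) → w ∈ T' := by
    intro w hw hwl
    refine ⟨fun i => w i.castSucc, ?_, 0, ?_⟩
    · rw [hST]
      have : Fin.snoc (fun i => w i.castSucc) (0:ℤ) = w := by
        funext v
        refine Fin.lastCases ?_ ?_ v
        · simp [hwl]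
        · intro i; simp
      simpa [this] using hw
    · funext v
      refine Fin.lastCases ?_ ?_ v
      · simp [hwl]
      · intro i; simp
  have hsup : ∀ w₁ ∈ T', ∀ w₂ ∈ T', w₁ ⊔ w₂ ∈ T' := by
    rintro w₁ ⟨z₁, hz₁, μ₁, rfl⟩ w₂ ⟨z₂, hz₂, μ₂, rfl⟩
    have h₁ : (Fin.snoc z₁ (0:ℤ) + fun _ => μ₁) ∈ T :=
      hT'T ⟨z₁, hz₁, μ₁, rfl⟩
    have h₂ : (Fin.snoc z₂ (0:ℤ) + fun _ => μ₂) ∈ T :=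
      hT'T ⟨z₂, hz₂, μ₂, rfl⟩
    have hst : ((Fin.snoc z₁ (0:ℤ) + fun _ => μ₁) ⊔ (Fin.snoc z₂ (0:ℤ) + fun _ => μ₂)) ∈ T :=
      (hTmm _ h₁ _ h₂).1
    have htr : (((Fin.snoc z₁ (0:ℤ) + fun _ => μ₁) ⊔ (Fin.snoc z₂ (0:ℤ) + fun _ => μ₂))
        + fun _ => -(max μ₁ μ₂)) ∈ T' := by
      apply hmemT' _ (hTtr _ hst _)
      simp [Pi.sup_apply]
    obtain ⟨z, hz, μ, hzμ⟩ := htr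
    refine ⟨z, hz, μ + max μ₁ μ₂, ?_⟩
    funext v
    have := congrFun hzμ v
    simp only [Pi.add_apply] at this ⊢
    omega
  have hinf : ∀ w₁ ∈ T', ∀ w₂ ∈ T', w₁ ⊓ w₂ ∈ T' := by
    rintro w₁ ⟨z₁, hz₁, μ₁, rfl⟩ w₂ ⟨z₂, hz₂, μ₂, rfl⟩
    have h₁ : (Fin.snoc z₁ (0:ℤ) + fun _ => μ₁) ∈ T :=
      hT'T ⟨z₁, hz₁, μ₁, rfl⟩
    have h₂ : (Fin.snoc z₂ (0:ℤ) + fun _ => μ₂) ∈ T :=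
      hT'T ⟨z₂, hz₂, μ₂, rfl⟩
    have hst : ((Fin.snoc z₁ (0:ℤ) + fun _ => μ₁) ⊓ (Fin.snoc z₂ (0:ℤ) + fun _ => μ₂)) ∈ T :=
      (hTmm _ h₁ _ h₂).2
    have htr : (((Fin.snoc z₁ (0:ℤ) + fun _ => μ₁) ⊓ (Fin.snoc z₂ (0:ℤ) + fun _ => μ₂))
        + fun _ => -(min μ₁ μ₂)) ∈ T' := by
      apply hmemT' _ (hTtr _ hst _)
      simp [Pi.inf_apply]
    obtain ⟨z, hz, μ, hzμ⟩ := htr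
    refine ⟨z, hz, μ + min μ₁ μ₂, ?_⟩
    funext v
    have := congrFun hzμ v
    simp only [Pi.add_apply] at this ⊢
    omega
  -- choose witnesses
  have hW : ∀ i j : Fin (n+1), ∃ w ∈ T', w i = yh i ∧ w j ≤ yh j := by
    intro i j
    obtain ⟨z, hz, hzle⟩ := h j i
    refine ⟨(Fin.snoc z (0:ℤ) : Fin (n+1) → ℤ) + fun _ => yh i - (Fin.snoc z (0:ℤ) : Fin (n+1) → ℤ) i,
      ⟨z, hz, yh i - (Fin.snoc z (0:ℤ) : Fin (n+1) → ℤ) i, rfl⟩, ?_, ?_⟩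
    · simp
    · simp only [Pi.add_apply]; omega
  choose W hWT' hWi hWj using hW
  -- assemble
  have huniv : (Finset.univ : Finset (Fin (n+1))).Nonempty := Finset.univ_nonempty
  set Z : Fin (n+1) → (Fin (n+1) → ℤ) := fun i => Finset.univ.inf' huniv (W i) with hZ
  have hZT' : ∀ i, Z i ∈ T' := fun i =>
    Finset.inf'_induction huniv (W i) hinf (fun j _ => hWT' i j)
  have hZi : ∀ i, Z i i = yh i := by
    intro i
    rw [hZ]
    simp only [Finset.inf'_apply]
    apply le_antisymm
    · exact Finset.inf'_le _ (Finset.mem_univ i) |>.trans_eq (hWi i i)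
    · exact Finset.le_inf' _ _ fun j _ => (hWi i j).ge
  have hZle : ∀ i, Z i ≤ yh := by
    intro i j
    calc Z i j ≤ W i j j := by
          rw [hZ]; simp only [Finset.inf'_apply]
          exact Finset.inf'_le _ (Finset.mem_univ j)
      _ ≤ yh j := hWj i j
  set Y : Fin (n+1) → ℤ := Finset.univ.sup' huniv Z with hY
  have hYT' : Y ∈ T' := Finset.sup'_induction huniv Z hsup (fun i _ => hZT' i)
  have hYy : Y = yh := by
    apply le_antisymm
    · exact Finset.sup'_le _ _ fun i _ => hZle i
    · intro j
      rw [hY]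
      simp only [Finset.sup'_apply]
      exact (hZi j).ge.trans (Finset.le_sup' (fun i => Z i j) (Finset.mem_univ j))
  rw [hYy] at hYT'
  obtain ⟨z, hz, μ, hzμ⟩ := hYT'
  have hμ : μ = 0 := by
    have := congrFun hzμ (Fin.last n)
    simp [hyh] at this
    omega
  subst hμ
  have : y = z := by
    funext i
    have := congrFun hzμ i.castSucc
    simp [hyh] at this
    omega
  rwa [this]

def wcost {V : Type*} (c : V → V → WithTop ℤ) : List V → WithTop ℤ
  | [] => 0
  | [_] => 0
  | a :: b :: l => c a b + wcost c (b :: l)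

lemma wcost_append_cons {V : Type*} (c : V → V → WithTop ℤ) (xs : List V) (v : V) (ys : List V) :
    wcost c (xs ++ v :: ys) = wcost c (xs ++ [v]) + wcost c (v :: ys) := by
  induction xs with
  | nil => simp [wcost]
  | cons a xs ih =>
    cases xs with
    | nil =>
      cases ys with
      | nil => simp [wcost]
      | cons b ys => simp [wcost, add_assoc]
    | cons b xs =>
      have : (a :: b :: xs) ++ v :: ys = a :: ((b :: xs) ++ v :: ys) := rfl
      rw [this]
      have h1 : wcost c (a :: ((b :: xs) ++ v :: ys)) = c a b + wcost c ((b :: xs) ++ v :: ys) := rfl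
      rw [h1, ih]
      have h2 : (a :: b :: xs) ++ [v] = a :: ((b :: xs) ++ [v]) := rfl
      rw [h2]
      have h3 : wcost c (a :: ((b :: xs) ++ [v])) = c a b + wcost c ((b :: xs) ++ [v]) := rfl
      rw [h3, add_assoc]

lemma wcost_eq_sum {V : Type*} (c : V → V → WithTop ℤ) (d : V) (l : List V) :
    wcost c l = ∑ i ∈ Finset.range (l.length - 1), c (l.getD i d) (l.getD (i+1) d) := by
  induction l with
  | nil => simp [wcost]
  | cons a l ih =>
    cases l with
    | nil => simp [wcost]
    | cons b t =>
      have hlen : (a :: b :: t).length - 1 = ((b :: t).length - 1) + 1 := by simp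
      rw [hlen, Finset.sum_range_succ']
      have : wcost c (a :: b :: t) = c a b + wcost c (b :: t) := rfl
      rw [this, ih, add_comm]
      have h0 : c ((a :: b :: t).getD 0 d) ((a :: b :: t).getD (0+1) d) = c a b := rfl
      rw [h0]
      congr 1

open Classical in
noncomputable def liftw {m : ℕ} (c : Fin (m+2) → Fin (m+2) → WithTop ℤ) :
    List (Fin (m+1)) → List (Fin (m+2))
  | [] => []
  | [a] => [a.castSucc]
  | a :: b :: l =>
    if c a.castSucc b.castSucc ≤
        c a.castSucc (Fin.last (m+1)) + c (Fin.last (m+1)) b.castSucc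
    then a.castSucc :: liftw c (b :: l)
    else a.castSucc :: Fin.last (m+1) :: liftw c (b :: l)

lemma liftw_cons {m : ℕ} (c : Fin (m+2) → Fin (m+2) → WithTop ℤ) (b : Fin (m+1))
    (l : List (Fin (m+1))) : ∃ t, liftw c (b :: l) = b.castSucc :: t := by
  cases l with
  | nil => exact ⟨[], rfl⟩
  | cons x l =>
    rw [liftw]
    split_ifs
    · exact ⟨_, rfl⟩
    · exact ⟨_, rfl⟩

lemma liftw_head? {m : ℕ} (c : Fin (m+2) → Fin (m+2) → WithTop ℤ) (l : List (Fin (m+1))) :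
    (liftw c l).head? = l.head?.map Fin.castSucc := by
  cases l with
  | nil => rfl
  | cons b l => obtain ⟨t, ht⟩ := liftw_cons c b l; rw [ht]; rfl

lemma liftw_getLast? {m : ℕ} (c : Fin (m+2) → Fin (m+2) → WithTop ℤ) (l : List (Fin (m+1))) :
    (liftw c l).getLast? = l.getLast?.map Fin.castSucc := by
  induction l with
  | nil => rfl
  | cons a l ih =>
    cases l with
    | nil => rfl
    | cons b t =>
      rw [liftw]
      obtain ⟨u, hu⟩ := liftw_cons c b t
      split_ifs
      · rw [hu] at ih ⊢
        rw [List.getLast?_cons_cons, ih, List.getLast?_cons_cons (l := t)]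
      · rw [hu] at ih ⊢
        rw [List.getLast?_cons_cons, List.getLast?_cons_cons, ih,
          List.getLast?_cons_cons (l := t)]

lemma liftw_length {m : ℕ} (c : Fin (m+2) → Fin (m+2) → WithTop ℤ) (l : List (Fin (m+1))) :
    l.length ≤ (liftw c l).length := by
  induction l with
  | nil => simp [liftw]
  | cons a l ih =>
    cases l with
    | nil => simp [liftw]
    | cons b t =>
      rw [liftw]
      split_ifs <;> simp only [List.length_cons] at ih ⊢ <;> omega

lemma liftw_wcost {m : ℕ} (c : Fin (m+2) → Fin (m+2) → WithTop ℤ) (l : List (Fin (m+1))) :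
    wcost c (liftw c l) =
      wcost (fun i j => min (c i.castSucc j.castSucc)
        (c i.castSucc (Fin.last (m+1)) + c (Fin.last (m+1)) j.castSucc)) l := by
  induction l with
  | nil => rfl
  | cons a l ih =>
    cases l with
    | nil => rfl
    | cons b t =>
      obtain ⟨u, hu⟩ := liftw_cons c b t
      rw [liftw]
      split_ifs with h
      · have h1 : wcost c (a.castSucc :: liftw c (b :: t)) =
            c a.castSucc b.castSucc + wcost c (liftw c (b :: t)) := by rw [hu]; rfl
        rw [h1, ih]
        have h2 : wcost (fun i j => min (c i.castSucc j.castSucc)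
            (c i.castSucc (Fin.last (m+1)) + c (Fin.last (m+1)) j.castSucc)) (a :: b :: t) =
            min (c a.castSucc b.castSucc)
              (c a.castSucc (Fin.last (m+1)) + c (Fin.last (m+1)) b.castSucc) +
            wcost (fun i j => min (c i.castSucc j.castSucc)
              (c i.castSucc (Fin.last (m+1)) + c (Fin.last (m+1)) j.castSucc)) (b :: t) := rfl
        rw [h2, min_eq_left h]
      · have h1 : wcost c (a.castSucc :: Fin.last (m+1) :: liftw c (b :: t)) =
            c a.castSucc (Fin.last (m+1)) + wcost c (Fin.last (m+1) :: liftw c (b :: t)) := rfl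
        have h2 : wcost c (Fin.last (m+1) :: liftw c (b :: t)) =
            c (Fin.last (m+1)) b.castSucc + wcost c (liftw c (b :: t)) := by rw [hu]; rfl
        have h3 : wcost (fun i j => min (c i.castSucc j.castSucc)
            (c i.castSucc (Fin.last (m+1)) + c (Fin.last (m+1)) j.castSucc)) (a :: b :: t) =
            min (c a.castSucc b.castSucc)
              (c a.castSucc (Fin.last (m+1)) + c (Fin.last (m+1)) b.castSucc) +
            wcost (fun i j => min (c i.castSucc j.castSucc)
              (c i.castSucc (Fin.last (m+1)) + c (Fin.last (m+1)) j.castSucc)) (b :: t) := rfl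
        rw [h1, h2, ih, h3, min_eq_right (le_of_not_ge h), add_assoc]

lemma extend_potential (m : ℕ) (c : Fin (m+2) → Fin (m+2) → WithTop ℤ)
    (y' : Fin (m+1) → ℤ)
    (htri : ∀ i j : Fin (m+1), ((y' j - y' i : ℤ) : WithTop ℤ) ≤
      c i.castSucc (Fin.last (m+1)) + c (Fin.last (m+1)) j.castSucc) :
    ∃ yl : ℤ, (∀ i' : Fin (m+1), ((yl - y' i' : ℤ) : WithTop ℤ) ≤ c i'.castSucc (Fin.last (m+1)))
      ∧ (∀ j' : Fin (m+1), ((y' j' - yl : ℤ) : WithTop ℤ) ≤ c (Fin.last (m+1)) j'.castSucc) := by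
  classical
  by_cases hG : (Finset.univ.filter
      (fun i : Fin (m+1) => c i.castSucc (Fin.last (m+1)) ≠ ⊤)).Nonempty
  · set Gset := Finset.univ.filter
      (fun i : Fin (m+1) => c i.castSucc (Fin.last (m+1)) ≠ ⊤)
    refine ⟨Gset.inf' hG (fun i => y' i + (c i.castSucc (Fin.last (m+1))).untopD 0), ?_, ?_⟩
    · intro i'
      by_cases hT : c i'.castSucc (Fin.last (m+1)) = ⊤
      · rw [hT]; exact le_top
      · obtain ⟨w, hw⟩ := WithTop.ne_top_iff_exists.1 hT
        have hiG : i' ∈ Gset := Finset.mem_filter.2 ⟨Finset.mem_univ _, hT⟩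
        have hle := Finset.inf'_le (fun i => y' i + (c i.castSucc (Fin.last (m+1))).untopD 0) hiG
        rw [← hw, WithTop.untopD_coe] at hle
        rw [← hw]
        exact_mod_cast (by omega : Gset.inf' hG
          (fun i => y' i + (c i.castSucc (Fin.last (m+1))).untopD 0) - y' i' ≤ w)
    · intro j'
      by_cases hT : c (Fin.last (m+1)) j'.castSucc = ⊤
      · rw [hT]; exact le_top
      · obtain ⟨v, hv⟩ := WithTop.ne_top_iff_exists.1 hT
        obtain ⟨i', hi'G, hi'⟩ := Finset.exists_mem_eq_inf' hG
          (fun i => y' i + (c i.castSucc (Fin.last (m+1))).untopD 0)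
        have hiT : c i'.castSucc (Fin.last (m+1)) ≠ ⊤ := (Finset.mem_filter.1 hi'G).2
        obtain ⟨w, hw⟩ := WithTop.ne_top_iff_exists.1 hiT
        have hval : ((y' j' - y' i' : ℤ) : WithTop ℤ) ≤ ((w + v : ℤ) : WithTop ℤ) := by
          refine (htri i' j').trans ?_
          rw [← hw, ← hv]; push_cast; rfl
        have hval' : y' j' - y' i' ≤ w + v := by exact_mod_cast hval
        rw [hi', ← hw, WithTop.untopD_coe, ← hv]
        exact_mod_cast (by omega : y' j' - (y' i' + w) ≤ v)
  · by_cases hF : (Finset.univ.filter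
        (fun j : Fin (m+1) => c (Fin.last (m+1)) j.castSucc ≠ ⊤)).Nonempty
    · set Fset := Finset.univ.filter
        (fun j : Fin (m+1) => c (Fin.last (m+1)) j.castSucc ≠ ⊤)
      refine ⟨Fset.sup' hF (fun j => y' j - (c (Fin.last (m+1)) j.castSucc).untopD 0), ?_, ?_⟩
      · intro i'
        by_cases hT : c i'.castSucc (Fin.last (m+1)) = ⊤
        · rw [hT]; exact le_top
        · exact absurd ⟨i', Finset.mem_filter.2 ⟨Finset.mem_univ _, hT⟩⟩ hG
      · intro j'
        by_cases hT : c (Fin.last (m+1)) j'.castSucc = ⊤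
        · rw [hT]; exact le_top
        · obtain ⟨v, hv⟩ := WithTop.ne_top_iff_exists.1 hT
          have hjF : j' ∈ Fset := Finset.mem_filter.2 ⟨Finset.mem_univ _, hT⟩
          have hle := Finset.le_sup'
            (fun j => y' j - (c (Fin.last (m+1)) j.castSucc).untopD 0) hjF
          rw [← hv, WithTop.untopD_coe] at hle
          rw [← hv]
          exact_mod_cast (by omega : y' j' - Fset.sup' hF
            (fun j => y' j - (c (Fin.last (m+1)) j.castSucc).untopD 0) ≤ v)
    · refine ⟨0, ?_, ?_⟩
      · intro i'
        by_cases hT : c i'.castSucc (Fin.last (m+1)) = ⊤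
        · rw [hT]; exact le_top
        · exact absurd ⟨i', Finset.mem_filter.2 ⟨Finset.mem_univ _, hT⟩⟩ hG
      · intro j'
        by_cases hT : c (Fin.last (m+1)) j'.castSucc = ⊤
        · rw [hT]; exact le_top
        · exact absurd ⟨j', Finset.mem_filter.2 ⟨Finset.mem_univ _, hT⟩⟩ hF

theorem fm_feasible : ∀ (m : ℕ) (c : Fin (m+1) → Fin (m+1) → WithTop ℤ),
    (∀ l : List (Fin (m+1)), 2 ≤ l.length → l.head? = l.getLast? → 0 ≤ wcost c l) →
    ∃ y : Fin (m+1) → ℤ, ∀ i j, ((y j - y i : ℤ) : WithTop ℤ) ≤ c i j := by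
  intro m
  induction m with
  | zero =>
    intro c hc
    refine ⟨0, fun i j => ?_⟩
    have hij : i = j := by have hi := i.isLt; have hj := j.isLt; ext1; omega
    have h0 : (0 : WithTop ℤ) ≤ wcost c [i, i] := hc [i, i] (by simp) (by simp)
    have : wcost c [i, i] = c i i + 0 := rfl
    rw [this, add_zero] at h0
    subst hij
    simpa using h0
  | succ m ih =>
    intro c hc
    have hnoneg' : ∀ l : List (Fin (m+1)), 2 ≤ l.length → l.head? = l.getLast? →
        0 ≤ wcost (fun i j => min (c i.castSucc j.castSucc)
          (c i.castSucc (Fin.last (m+1)) + c (Fin.last (m+1)) j.castSucc)) l := by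
      intro l hl hcl
      rw [← liftw_wcost]
      exact hc (liftw c l) (hl.trans (liftw_length c l))
        (by rw [liftw_head?, liftw_getLast?, hcl])
    obtain ⟨y', hy'⟩ := ih _ hnoneg'
    have htri : ∀ i j : Fin (m+1), ((y' j - y' i : ℤ) : WithTop ℤ) ≤
        c i.castSucc (Fin.last (m+1)) + c (Fin.last (m+1)) j.castSucc :=
      fun i j => (hy' i j).trans (min_le_right _ _)
    obtain ⟨yl, hyl1, hyl2⟩ := extend_potential m c y' htri
    have hll : (0 : WithTop ℤ) ≤ c (Fin.last (m+1)) (Fin.last (m+1)) := by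
      have h0 : (0 : WithTop ℤ) ≤ wcost c [Fin.last (m+1), Fin.last (m+1)] :=
        hc _ (by simp) (by simp)
      have heq : wcost c [Fin.last (m+1), Fin.last (m+1)] =
        c (Fin.last (m+1)) (Fin.last (m+1)) + 0 := rfl
      rw [heq, add_zero] at h0
      exact h0
    refine ⟨Fin.snoc y' yl, fun i j => ?_⟩
    refine Fin.lastCases ?_ ?_ i
    · refine Fin.lastCases ?_ ?_ j
      · simpa using hll
      · intro j'
        rw [Fin.snoc_last, Fin.snoc_castSucc]
        exact hyl2 j'
    · intro i'
      refine Fin.lastCases ?_ ?_ j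
      · rw [Fin.snoc_last, Fin.snoc_castSucc]
        exact hyl1 i'
      · intro j'
        rw [Fin.snoc_castSucc, Fin.snoc_castSucc]
        exact (hy' i' j').trans (min_le_left _ _)

lemma exists_dup_split {V : Type*} {l : List V} (h : ¬ l.Nodup) :
    ∃ (x : V) (xs ys zs : List V), l = xs ++ x :: (ys ++ x :: zs) := by
  induction l with
  | nil => simp at h
  | cons a t ih =>
    by_cases ha : a ∈ t
    · obtain ⟨ys, zs, rfl⟩ := List.append_of_mem ha
      exact ⟨a, [], ys, zs, rfl⟩
    · have ht : ¬ t.Nodup := fun hn => h (List.nodup_cons.2 ⟨ha, hn⟩)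
      obtain ⟨x, xs, ys, zs, rfl⟩ := ih ht
      exact ⟨x, a :: xs, ys, zs, rfl⟩

lemma head?_append_cons {V : Type*} (xs : List V) (x : V) (R R' : List V) :
    (xs ++ x :: R).head? = (xs ++ x :: R').head? := by cases xs <;> simp

lemma exists_simple_negcycle {V : Type*} (c : V → V → WithTop ℤ) :
    ∀ (N : ℕ) (l : List V), l.length ≤ N → 2 ≤ l.length → l.head? = l.getLast? →
      wcost c l < 0 →
      ∃ l' : List V, 2 ≤ l'.length ∧ l'.head? = l'.getLast? ∧ wcost c l' < 0 ∧
        l'.dropLast.Nodup := by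
  intro N
  induction N with
  | zero => intro l h1 h2 _ _; omega
  | succ N ih =>
    intro l hlen h2 hcl hneg
    by_cases hnd : l.dropLast.Nodup
    · exact ⟨l, h2, hcl, hneg, hnd⟩
    · obtain ⟨x, xs, ys, zs, hsplit⟩ := exists_dup_split hnd
      have hlnil : l ≠ [] := by intro h; rw [h] at h2; simp at h2
      set a := l.getLast hlnil with ha
      have hl : l = (xs ++ x :: (ys ++ x :: zs)) ++ [a] := by
        rw [← hsplit, List.dropLast_append_getLast hlnil]
      have hla : l.getLast? = some a := by
        rw [hl, List.getLast?_concat]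
      have hl2 : l = xs ++ x :: (ys ++ x :: (zs ++ [a])) := by
        rw [hl]; simp
      have hcost : wcost c l = wcost c (xs ++ [x]) +
          (wcost c (x :: (ys ++ [x])) + wcost c (x :: (zs ++ [a]))) := by
        rw [hl2, wcost_append_cons]
        congr 1
        have : (x :: (ys ++ x :: (zs ++ [a]))) = (x :: ys) ++ x :: (zs ++ [a]) := by simp
        rw [this, wcost_append_cons]
        rfl
      set l₂ := xs ++ x :: (zs ++ [a]) with hl₂
      have hcost₂ : wcost c l₂ = wcost c (xs ++ [x]) + wcost c (x :: (zs ++ [a])) :=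
        wcost_append_cons c xs x (zs ++ [a])
      have hsum : wcost c l₂ + wcost c (x :: (ys ++ [x])) = wcost c l := by
        rw [hcost, hcost₂]
        abel
      have hor : wcost c l₂ < 0 ∨ wcost c (x :: (ys ++ [x])) < 0 := by
        by_contra hcon
        push_neg at hcon
        have := add_nonneg hcon.1 hcon.2
        rw [hsum] at this
        exact absurd hneg (not_lt.2 this)
      have hlenl : l.length = xs.length + ys.length + zs.length + 3 := by
        rw [hl]; simp; omega
      rcases hor with h₂neg | h₁neg
      · apply ih l₂
        · have : l₂.length = xs.length + zs.length + 2 := by rw [hl₂]; simp; omega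
          omega
        · have : l₂.length = xs.length + zs.length + 2 := by rw [hl₂]; simp; omega
          omega
        · have hhead : l₂.head? = l.head? := by
            rw [hl₂, hl2]
            exact head?_append_cons xs x _ _
          have hlast : l₂.getLast? = some a := by
            have : l₂ = (xs ++ x :: zs) ++ [a] := by rw [hl₂]; simp
            rw [this, List.getLast?_concat]
          rw [hhead, hlast, hcl, hla]
        · exact h₂neg
      · apply ih (x :: (ys ++ [x]))
        · simp; omega
        · simp
        · have : x :: (ys ++ [x]) = (x :: ys) ++ [x] := by simp
          rw [this, List.getLast?_concat]
          rfl
        · exact h₁neg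

lemma exists_ge_of_le_lub {A : Set ℤ} (hA : A.Nonempty) {t : ℤ}
    (h : (t : WithTop ℤ) ≤ lub A) : ∃ a ∈ A, t ≤ a := by
  by_contra hc
  push_neg at hc
  have hle : lub A ≤ ((t - 1 : ℤ) : WithTop ℤ) :=
    lub_le hA (fun a ha => by have := hc a ha; omega)
  have := h.trans hle
  rw [WithTop.coe_le_coe] at this
  omega

lemma coe_sub_le_of_le_add {a s : ℤ} {R : WithTop ℤ} (h : (a : WithTop ℤ) ≤ ↑s + R) :
    ((a - s : ℤ) : WithTop ℤ) ≤ R := by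
  cases R with
  | top => exact le_top
  | coe r =>
    rw [← WithTop.coe_add, WithTop.coe_le_coe] at h
    exact WithTop.coe_le_coe.2 (by omega)

/-- Polyhedral description of an L₂♮-convex set: there are bounds
`γ I J ∈ ℤ ∪ {+∞}` for disjoint `I J` with `|I| - |J| ∈ {-1,0,1}` such that
`S = {x : x(J) - x(I) ≤ γ I J for all such I, J}`. -/
theorem polyhedral_description_of_L2nat_convex_set {n : ℕ} (S : Set (Fin n → ℤ))
    (hS : IsL2NatConvexSet S) :
    ∃ γ : Finset (Fin n) → Finset (Fin n) → WithTop ℤ,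
      S = {x : Fin n → ℤ | ∀ I J : Finset (Fin n), Disjoint I J →
        (I.card : ℤ) - (J.card : ℤ) ∈ ({-1, 0, 1} : Set ℤ) →
        (((∑ j ∈ J, x j) - ∑ i ∈ I, x i : ℤ) : WithTop ℤ) ≤ γ I J} := by
  classical
  obtain ⟨S₁, S₂, hS₁, hS₂, hsum⟩ := hS
  obtain ⟨z₁, hz₁⟩ := hS₁.1
  obtain ⟨z₂, hz₂⟩ := hS₂.1
  have hSne : S.Nonempty := ⟨z₁ + z₂, by rw [hsum]; exact Set.mem_add.2 ⟨z₁, hz₁, z₂, hz₂, rfl⟩⟩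
  refine ⟨fun I J => lub {v : ℤ | ∃ z ∈ S, v = (∑ j ∈ J, z j) - ∑ i ∈ I, z i}, ?_⟩
  ext x
  simp only [Set.mem_setOf_eq]
  constructor
  · intro hx I J _ _
    exact le_lub (show _ ∈ {v : ℤ | ∃ z ∈ S, v = (∑ j ∈ J, z j) - ∑ i ∈ I, z i}
      from ⟨x, hx, rfl⟩)
  · intro hx
    by_contra hxS
    -- abstract descriptions of S₁ and S₂
    have hdesc : ∀ (S' : Set (Fin n → ℤ)), IsLNatConvexSet S' →
        ∃ c' : Fin (n+1) → Fin (n+1) → WithTop ℤ,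
          (∀ i j, ∀ z ∈ S', (((Fin.snoc z 0 : Fin (n+1) → ℤ) j
              - (Fin.snoc z 0 : Fin (n+1) → ℤ) i : ℤ) : WithTop ℤ) ≤ c' i j) ∧
          (∀ i j (t : ℤ), (t : WithTop ℤ) ≤ c' i j → ∃ z ∈ S',
            t ≤ (Fin.snoc z 0 : Fin (n+1) → ℤ) j - (Fin.snoc z 0 : Fin (n+1) → ℤ) i) := by
      intro S' hS'
      obtain ⟨z₀, hz₀⟩ := hS'.1
      refine ⟨fun i j => lub {v : ℤ | ∃ z ∈ S',
        v = (Fin.snoc z 0 : Fin (n+1) → ℤ) j - (Fin.snoc z 0 : Fin (n+1) → ℤ) i}, ?_, ?_⟩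
      · intro i j z hz
        exact le_lub (show _ ∈ {v : ℤ | ∃ z ∈ S',
          v = (Fin.snoc z 0 : Fin (n+1) → ℤ) j - (Fin.snoc z 0 : Fin (n+1) → ℤ) i}
          from ⟨z, hz, rfl⟩)
      · intro i j t ht
        obtain ⟨a, ⟨z, hz, rfl⟩, hle⟩ := exists_ge_of_le_lub
          (⟨_, z₀, hz₀, rfl⟩ : Set.Nonempty {v : ℤ | ∃ z ∈ S',
            v = (Fin.snoc z 0 : Fin (n+1) → ℤ) j - (Fin.snoc z 0 : Fin (n+1) → ℤ) i}) ht
        exact ⟨z, hz, hle⟩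
    obtain ⟨c1, hc1up, hc1dn⟩ := hdesc S₁ hS₁
    obtain ⟨c2, hc2up, hc2dn⟩ := hdesc S₂ hS₂
    set c : Fin (n+1) → Fin (n+1) → WithTop ℤ := fun i j =>
      min (c1 i j) ((((Fin.snoc x 0 : Fin (n+1) → ℤ) j
        - (Fin.snoc x 0 : Fin (n+1) → ℤ) i : ℤ) : WithTop ℤ) + c2 j i) with hcdef
    -- Step 1 : the combined difference system is infeasible
    have hinfeas : ¬ ∃ y : Fin (n+1) → ℤ, ∀ i j, ((y j - y i : ℤ) : WithTop ℤ) ≤ c i j := by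
      rintro ⟨y, hy⟩
      have hcy : ∀ i j, ((y j - y i : ℤ) : WithTop ℤ) ≤ c1 i j :=
        fun i j => (hy i j).trans (min_le_left _ _)
      have hcy2 : ∀ i j, ((y j - y i : ℤ) : WithTop ℤ) ≤
          (((Fin.snoc x 0 : Fin (n+1) → ℤ) j
            - (Fin.snoc x 0 : Fin (n+1) → ℤ) i : ℤ) : WithTop ℤ) + c2 j i :=
        fun i j => (hy i j).trans (min_le_right _ _)
      set u : Fin n → ℤ := fun w => y w.castSucc - y (Fin.last n) with hu
      have hyu : ∀ v : Fin (n+1), (Fin.snoc u 0 : Fin (n+1) → ℤ) v = y v - y (Fin.last n) := by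
        intro v
        refine Fin.lastCases ?_ ?_ v
        · simp
        · intro w; simp [hu]
      have huS₁ : u ∈ S₁ := by
        apply mem_of_forall_exists hS₁
        intro i j
        obtain ⟨z, hz, hle⟩ := hc1dn i j (y j - y i) (hcy i j)
        exact ⟨z, hz, by rw [hyu j, hyu i]; omega⟩
      have huS₂ : x - u ∈ S₂ := by
        apply mem_of_forall_exists hS₂
        intro i j
        have h1 : ((y i - y j : ℤ) : WithTop ℤ) ≤
            (((Fin.snoc x 0 : Fin (n+1) → ℤ) i
              - (Fin.snoc x 0 : Fin (n+1) → ℤ) j : ℤ) : WithTop ℤ) + c2 i j := hcy2 j i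
        have h2 := coe_sub_le_of_le_add h1
        obtain ⟨z, hz, hle⟩ := hc2dn i j _ h2
        refine ⟨z, hz, ?_⟩
        have hv1 : (Fin.snoc (x - u) 0 : Fin (n+1) → ℤ) j =
            (Fin.snoc x 0 : Fin (n+1) → ℤ) j - y j + y (Fin.last n) := by
          refine Fin.lastCases ?_ ?_ j
          · simp
          · intro w; simp [hu]; ring
        have hv2 : (Fin.snoc (x - u) 0 : Fin (n+1) → ℤ) i =
            (Fin.snoc x 0 : Fin (n+1) → ℤ) i - y i + y (Fin.last n) := by
          refine Fin.lastCases ?_ ?_ i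
          · simp
          · intro w; simp [hu]; ring
        rw [hv1, hv2]
        omega
      exact hxS (by rw [hsum]; exact Set.mem_add.2 ⟨u, huS₁, x - u, huS₂, by ring⟩)
    -- Step 2 : a negative closed walk exists
    have hneg : ∃ l : List (Fin (n+1)), 2 ≤ l.length ∧ l.head? = l.getLast? ∧ wcost c l < 0 := by
      by_contra hcon
      push_neg at hcon
      exact hinfeas (fm_feasible n c hcon)
    obtain ⟨l, hl2, hlcl, hlneg⟩ := hneg
    -- Step 3 : extract a simple negative cycle
    obtain ⟨l', hl2', hlcl', hlneg', hlnd'⟩ :=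
      exists_simple_negcycle c l.length l le_rfl hl2 hlcl hlneg
    -- Step 4 : index the cycle
    set k : ℕ := l'.length - 1 with hk
    have hk1 : 1 ≤ k := by omega
    set g : ℕ → Fin (n+1) := fun i => l'.getD i (Fin.last n) with hgdef
    have hclosed : g 0 = g k := by
      have h := hlcl'
      rw [List.head?_eq_getElem?, List.getLast?_eq_getElem?] at h
      simp only [hgdef]
      rw [List.getD_eq_getElem?_getD, List.getD_eq_getElem?_getD, hk, ← h]
    have hinj : ∀ i j, i < k → j < k → g i = g j → i = j := by
      intro i j hi hj hij
      have hdl : l'.dropLast.length = k := by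
        rw [List.length_dropLast, hk]
      have hgi : ∀ i, ∀ h : i < k, g i = l'.dropLast[i]'(by rw [hdl]; exact h) := by
        intro i hik
        rw [hgdef]
        simp only
        rw [List.getD_eq_getElem l' _ (by omega), List.getElem_dropLast]
      have h1 := hgi i hi
      have h2 := hgi j hj
      rw [h1, h2] at hij
      exact (hlnd'.getElem_inj_iff).1 hij
    have hsumneg : ∑ t ∈ Finset.range k, c (g t) (g (t+1)) < 0 := by
      have := wcost_eq_sum c (Fin.last n) l'
      rw [this] at hlneg'
      rw [hk]
      exact hlneg'
    -- Step 5 : build the separating pair (I, J)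
    set cnd : ℕ → Prop := fun t => c1 (g t) (g (t+1)) ≤
      (((Fin.snoc x 0 : Fin (n+1) → ℤ) (g (t+1))
        - (Fin.snoc x 0 : Fin (n+1) → ℤ) (g t) : ℤ) : WithTop ℤ) + c2 (g (t+1)) (g t)
      with hcnddef
    set A : Finset ℕ := (Finset.range k).filter cnd with hAdef
    set B : Finset ℕ := (Finset.range k).filter (fun t => ¬ cnd t) with hBdef
    have hmA : ∀ t ∈ A, t < k := fun t ht => Finset.mem_range.1 (Finset.mem_filter.1 ht).1
    have hinjT : ∀ t₁ ∈ A, ∀ t₂ ∈ A, g t₁ = g t₂ → t₁ = t₂ :=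
      fun t₁ h₁ t₂ h₂ he => hinj t₁ t₂ (hmA _ h₁) (hmA _ h₂) he
    have hinjH : ∀ t₁ ∈ A, ∀ t₂ ∈ A, g (t₁+1) = g (t₂+1) → t₁ = t₂ := by
      intro t₁ h₁ t₂ h₂ he
      have l₁ := hmA _ h₁
      have l₂ := hmA _ h₂
      by_cases e₁ : t₁ + 1 = k
      · by_cases e₂ : t₂ + 1 = k
        · omega
        · exfalso
          have hg0 : g (t₂+1) = g 0 := by rw [← he, e₁, ← hclosed]
          have := hinj (t₂+1) 0 (by omega) (by omega) hg0
          omega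
      · by_cases e₂ : t₂ + 1 = k
        · exfalso
          have hg0 : g (t₁+1) = g 0 := by rw [he, e₂, ← hclosed]
          have := hinj (t₁+1) 0 (by omega) (by omega) hg0
          omega
        · have := hinj (t₁+1) (t₂+1) (by omega) (by omega) he
          omega
    set Heads : Finset (Fin (n+1)) := A.image (fun t => g (t+1)) with hHeadsdef
    set Tails : Finset (Fin (n+1)) := A.image g with hTailsdef
    set Jh : Finset (Fin (n+1)) := Heads \ Tails with hJhdef
    set Ih : Finset (Fin (n+1)) := Tails \ Heads with hIhdef
    have key : ∀ f : Fin (n+1) → ℤ,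
        ∑ t ∈ A, (f (g (t+1)) - f (g t)) = ∑ v ∈ Jh, f v - ∑ v ∈ Ih, f v := by
      intro f
      rw [Finset.sum_sub_distrib]
      have h1 : ∑ t ∈ A, f (g (t+1)) = ∑ v ∈ Heads, f v :=
        (Finset.sum_image hinjH).symm
      have h2 : ∑ t ∈ A, f (g t) = ∑ v ∈ Tails, f v := (Finset.sum_image hinjT).symm
      have h3 := Finset.sum_inter_add_sum_sdiff Heads Tails f
      have h4 := Finset.sum_inter_add_sum_sdiff Tails Heads f
      rw [Finset.inter_comm] at h4
      rw [h1, h2, hJhdef, hIhdef]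
      linarith [h3, h4]
    have htel : ∀ f : Fin (n+1) → ℤ,
        ∑ t ∈ Finset.range k, (f (g (t+1)) - f (g t)) = 0 := by
      intro f
      rw [Finset.sum_range_sub (fun i => f (g i)) k, hclosed]
      ring
    have hABsplit : ∀ f : ℕ → ℤ,
        ∑ t ∈ A, f t + ∑ t ∈ B, f t = ∑ t ∈ Finset.range k, f t := by
      intro f
      rw [hAdef, hBdef]
      exact Finset.sum_filter_add_sum_filter_not _ _ _
    have hBkey : ∀ f : Fin (n+1) → ℤ,
        ∑ t ∈ B, (f (g t) - f (g (t+1))) = ∑ v ∈ Jh, f v - ∑ v ∈ Ih, f v := by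
      intro f
      have h1 := hABsplit (fun t => f (g (t+1)) - f (g t))
      have h2 := htel f
      have h3 := key f
      have h4 : ∑ t ∈ B, (f (g t) - f (g (t+1)))
          + ∑ t ∈ B, (f (g (t+1)) - f (g t)) = 0 := by
        rw [← Finset.sum_add_distrib]
        apply Finset.sum_eq_zero
        intro t _
        ring
      linarith
    have hBfwd : ∀ f : Fin (n+1) → ℤ,
        ∑ t ∈ B, (f (g (t+1)) - f (g t)) = -(∑ v ∈ Jh, f v - ∑ v ∈ Ih, f v) := by
      intro f
      have h1 := hABsplit (fun t => f (g (t+1)) - f (g t))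
      have h2 := htel f
      have h3 := key f
      linarith
    have hcardH : Heads.card = A.card := Finset.card_image_of_injOn
      (fun a ha b hb he => hinjH a ha b hb he)
    have hcardT : Tails.card = A.card := Finset.card_image_of_injOn
      (fun a ha b hb he => hinjT a ha b hb he)
    have hcardJI : Jh.card = Ih.card := by
      have h1 := Finset.card_sdiff_add_card_inter Heads Tails
      have h2 := Finset.card_sdiff_add_card_inter Tails Heads
      rw [Finset.inter_comm] at h2
      rw [hJhdef, hIhdef]
      omega
    have hdisjh : Disjoint Jh Ih := by
      rw [Finset.disjoint_left]
      intro v hv hv'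
      exact (Finset.mem_sdiff.1 hv).2 (Finset.mem_sdiff.1 hv').1
    have proj : ∀ Kh : Finset (Fin (n+1)),
        Kh.card = (Finset.univ.filter (fun w : Fin n => w.castSucc ∈ Kh)).card
          + (if Fin.last n ∈ Kh then 1 else 0) ∧
        ∀ z : Fin n → ℤ, ∑ v ∈ Kh, (Fin.snoc z 0 : Fin (n+1) → ℤ) v
          = ∑ w ∈ Finset.univ.filter (fun w : Fin n => w.castSucc ∈ Kh), z w := by
      intro Kh
      have hmap : (Finset.univ.filter (fun w : Fin n => w.castSucc ∈ Kh)).map Fin.castSuccEmb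
          = Kh.erase (Fin.last n) := by
        ext v
        simp only [Finset.mem_map, Finset.mem_filter, Finset.mem_univ, true_and,
          Finset.mem_erase, Fin.castSuccEmb]
        constructor
        · rintro ⟨w, hw, rfl⟩
          exact ⟨(Fin.castSucc_lt_last w).ne, hw⟩
        · rintro ⟨hne, hv⟩
          obtain ⟨w, rfl⟩ := Fin.exists_castSucc_eq.2 hne
          exact ⟨w, hv, rfl⟩
      constructor
      · by_cases hl : Fin.last n ∈ Kh
        · have h1 := Finset.card_erase_of_mem hl
          have h2 := Finset.card_map
            (s := Finset.univ.filter (fun w : Fin n => w.castSucc ∈ Kh)) Fin.castSuccEmb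
          rw [hmap] at h2
          have h3 : 1 ≤ Kh.card := Finset.card_pos.2 ⟨_, hl⟩
          rw [if_pos hl]
          omega
        · have h2 := Finset.card_map
            (s := Finset.univ.filter (fun w : Fin n => w.castSucc ∈ Kh)) Fin.castSuccEmb
          rw [hmap, Finset.erase_eq_of_notMem hl] at h2
          rw [if_neg hl]
          omega
      · intro z
        have hstep : ∑ w ∈ Finset.univ.filter (fun w : Fin n => w.castSucc ∈ Kh), z w
            = ∑ v ∈ Kh.erase (Fin.last n), (Fin.snoc z 0 : Fin (n+1) → ℤ) v := by
          rw [← hmap, Finset.sum_map]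
          apply Finset.sum_congr rfl
          intro w _
          show z w = (Fin.snoc z 0 : Fin (n+1) → ℤ) w.castSucc
          simp
        rw [hstep]
        by_cases hl : Fin.last n ∈ Kh
        · have hsplit := Finset.sum_erase_add Kh
            (fun v => (Fin.snoc z 0 : Fin (n+1) → ℤ) v) hl
          simp only [Fin.snoc_last, add_zero] at hsplit
          exact hsplit.symm
        · rw [Finset.erase_eq_of_notMem hl]
    set J : Finset (Fin n) := Finset.univ.filter (fun w : Fin n => w.castSucc ∈ Jh) with hJdef
    set I : Finset (Fin n) := Finset.univ.filter (fun w : Fin n => w.castSucc ∈ Ih) with hIdef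
    have hJcard := (proj Jh).1
    have hIcard := (proj Ih).1
    have hJsum := (proj Jh).2
    have hIsum := (proj Ih).2
    rw [← hJdef] at hJcard hJsum
    rw [← hIdef] at hIcard hIsum
    have hdisjIJ : Disjoint I J := by
      rw [Finset.disjoint_left]
      intro w hwI hwJ
      have h1 : w.castSucc ∈ Ih := (Finset.mem_filter.1 hwI).2
      have h2 : w.castSucc ∈ Jh := (Finset.mem_filter.1 hwJ).2
      exact (Finset.disjoint_left.1 hdisjh h2) h1
    have hnotboth : ¬ (Fin.last n ∈ Jh ∧ Fin.last n ∈ Ih) := by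
      rintro ⟨h1, h2⟩
      exact (Finset.disjoint_left.1 hdisjh h1) h2
    have hcardIJ : (I.card : ℤ) - (J.card : ℤ) ∈ ({-1, 0, 1} : Set ℤ) := by
      simp only [Set.mem_insert_iff, Set.mem_singleton_iff]
      by_cases hJl : Fin.last n ∈ Jh
      · by_cases hIl : Fin.last n ∈ Ih
        · exact absurd ⟨hJl, hIl⟩ hnotboth
        · rw [if_pos hJl] at hJcard; rw [if_neg hIl] at hIcard; omega
      · by_cases hIl : Fin.last n ∈ Ih
        · rw [if_neg hJl] at hJcard; rw [if_pos hIl] at hIcard; omega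
        · rw [if_neg hJl] at hJcard; rw [if_neg hIl] at hIcard; omega
    -- the final bound on members of S
    have hfinal : ∀ z ∈ S, (∑ j ∈ J, z j) - ∑ i ∈ I, z i
        ≤ ((∑ j ∈ J, x j) - ∑ i ∈ I, x i) - 1 := by
      intro z hz
      rw [hsum] at hz
      obtain ⟨s₁, hs₁, s₂, hs₂, rfl⟩ := Set.mem_add.1 hz
      set e : ℕ → ℤ := fun t =>
        if cnd t then
          (Fin.snoc s₁ 0 : Fin (n+1) → ℤ) (g (t+1)) - (Fin.snoc s₁ 0 : Fin (n+1) → ℤ) (g t)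
        else ((Fin.snoc s₂ 0 : Fin (n+1) → ℤ) (g t) - (Fin.snoc s₂ 0 : Fin (n+1) → ℤ) (g (t+1)))
          + ((Fin.snoc x 0 : Fin (n+1) → ℤ) (g (t+1)) - (Fin.snoc x 0 : Fin (n+1) → ℤ) (g t))
        with hedef
      have hbound : ∀ t, ((e t : ℤ) : WithTop ℤ) ≤ c (g t) (g (t+1)) := by
        intro t
        by_cases hct : cnd t
        · have h1 : e t = (Fin.snoc s₁ 0 : Fin (n+1) → ℤ) (g (t+1))
              - (Fin.snoc s₁ 0 : Fin (n+1) → ℤ) (g t) := by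
            rw [hedef]; simp only [if_pos hct]
          have hct' : c1 (g t) (g (t+1)) ≤
              (((Fin.snoc x 0 : Fin (n+1) → ℤ) (g (t+1))
                - (Fin.snoc x 0 : Fin (n+1) → ℤ) (g t) : ℤ) : WithTop ℤ)
                + c2 (g (t+1)) (g t) := by
            have := hct; rw [hcnddef] at this; exact this
          have h2 : c (g t) (g (t+1)) = c1 (g t) (g (t+1)) := by
            simp only [hcdef]
            exact min_eq_left hct'
          rw [h1, h2]
          exact hc1up _ _ s₁ hs₁
        · have h1 : e t = ((Fin.snoc s₂ 0 : Fin (n+1) → ℤ) (g t)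
              - (Fin.snoc s₂ 0 : Fin (n+1) → ℤ) (g (t+1)))
              + ((Fin.snoc x 0 : Fin (n+1) → ℤ) (g (t+1))
                - (Fin.snoc x 0 : Fin (n+1) → ℤ) (g t)) := by
            rw [hedef]; simp only [if_neg hct]
          have hct' : ¬ c1 (g t) (g (t+1)) ≤
              (((Fin.snoc x 0 : Fin (n+1) → ℤ) (g (t+1))
                - (Fin.snoc x 0 : Fin (n+1) → ℤ) (g t) : ℤ) : WithTop ℤ)
                + c2 (g (t+1)) (g t) := by
            have := hct; rw [hcnddef] at this; exact this
          have h2 : c (g t) (g (t+1)) =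
              (((Fin.snoc x 0 : Fin (n+1) → ℤ) (g (t+1))
                - (Fin.snoc x 0 : Fin (n+1) → ℤ) (g t) : ℤ) : WithTop ℤ)
                + c2 (g (t+1)) (g t) := by
            simp only [hcdef]
            exact min_eq_right (le_of_not_ge hct')
          rw [h1, h2]
          push_cast
          rw [add_comm]
          exact add_le_add_right (hc2up _ _ s₂ hs₂) _
      have hsumle : ∑ t ∈ Finset.range k, e t ≤ -1 := by
        have h1 : ((∑ t ∈ Finset.range k, e t : ℤ) : WithTop ℤ) < ((0:ℤ) : WithTop ℤ) := by
          rw [WithTop.coe_sum]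
          refine lt_of_le_of_lt (Finset.sum_le_sum fun t _ => hbound t) ?_
          exact_mod_cast hsumneg
        rw [WithTop.coe_lt_coe] at h1
        omega
      have hsplit : ∑ t ∈ A, e t + ∑ t ∈ B, e t = ∑ t ∈ Finset.range k, e t := hABsplit e
      have heA : ∑ t ∈ A, e t = ∑ t ∈ A,
          ((Fin.snoc s₁ 0 : Fin (n+1) → ℤ) (g (t+1))
            - (Fin.snoc s₁ 0 : Fin (n+1) → ℤ) (g t)) := by
        apply Finset.sum_congr rfl
        intro t ht
        have hct : cnd t := by
          rw [hAdef] at ht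
          exact (Finset.mem_filter.1 ht).2
        rw [hedef]; simp only [if_pos hct]
      have heB : ∑ t ∈ B, e t = ∑ t ∈ B,
          (((Fin.snoc s₂ 0 : Fin (n+1) → ℤ) (g t)
            - (Fin.snoc s₂ 0 : Fin (n+1) → ℤ) (g (t+1)))
          + ((Fin.snoc x 0 : Fin (n+1) → ℤ) (g (t+1))
            - (Fin.snoc x 0 : Fin (n+1) → ℤ) (g t))) := by
        apply Finset.sum_congr rfl
        intro t ht
        have hct : ¬ cnd t := by
          rw [hBdef] at ht
          exact (Finset.mem_filter.1 ht).2
        rw [hedef]; simp only [if_neg hct]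
      have hkeys₁ := key (Fin.snoc s₁ 0 : Fin (n+1) → ℤ)
      have hkeys₂ := hBkey (Fin.snoc s₂ 0 : Fin (n+1) → ℤ)
      have hkeyx := hBfwd (Fin.snoc x 0 : Fin (n+1) → ℤ)
      have hBadd : ∑ t ∈ B,
          (((Fin.snoc s₂ 0 : Fin (n+1) → ℤ) (g t)
            - (Fin.snoc s₂ 0 : Fin (n+1) → ℤ) (g (t+1)))
          + ((Fin.snoc x 0 : Fin (n+1) → ℤ) (g (t+1))
            - (Fin.snoc x 0 : Fin (n+1) → ℤ) (g t))) =
          ∑ t ∈ B, ((Fin.snoc s₂ 0 : Fin (n+1) → ℤ) (g t)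
            - (Fin.snoc s₂ 0 : Fin (n+1) → ℤ) (g (t+1)))
          + ∑ t ∈ B, ((Fin.snoc x 0 : Fin (n+1) → ℤ) (g (t+1))
            - (Fin.snoc x 0 : Fin (n+1) → ℤ) (g t)) := Finset.sum_add_distrib
      have hs₁J := hJsum s₁
      have hs₁I := hIsum s₁
      have hs₂J := hJsum s₂
      have hs₂I := hIsum s₂
      have hxJ := hJsum x
      have hxI := hIsum x
      have hsum12J : ∑ j ∈ J, (s₁ + s₂) j = ∑ j ∈ J, s₁ j + ∑ j ∈ J, s₂ j := by
        simp only [Pi.add_apply]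
        exact Finset.sum_add_distrib
      have hsum12I : ∑ i ∈ I, (s₁ + s₂) i = ∑ i ∈ I, s₁ i + ∑ i ∈ I, s₂ i := by
        simp only [Pi.add_apply]
        exact Finset.sum_add_distrib
      rw [hsum12J, hsum12I]
      linarith [hsumle, hsplit, heA, heB, hkeys₁, hkeys₂, hkeyx, hBadd,
        hs₁J, hs₁I, hs₂J, hs₂I, hxJ, hxI]
    have hγle : lub {v : ℤ | ∃ z ∈ S, v = (∑ j ∈ J, z j) - ∑ i ∈ I, z i}
        ≤ (((∑ j ∈ J, x j) - ∑ i ∈ I, x i - 1 : ℤ) : WithTop ℤ) := by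
      apply lub_le
      · obtain ⟨z0, hz0⟩ := hSne
        exact ⟨_, z0, hz0, rfl⟩
      · rintro a ⟨z, hz, rfl⟩
        have := hfinal z hz
        omega
    have hxIJ := hx I J hdisjIJ hcardIJ
    have hcontr := hxIJ.trans hγle
    rw [WithTop.coe_le_coe] at hcontr
    omega
end

section
/- Let N = {1,…,n}, let E₁, E₂ ⊆ {(i,j) ∈ N × N : i ≠ j}, and let γ⁽¹⁾ : E₁ → ℝ and γ⁽²⁾ : E₂ → ℝ. Suppose that for k = 1, 2 the polyhedron P_k = {y ∈ ℝ^n : y_j − y_i ≤ γ⁽ᵏ⁾_{ij} for all (i,j) ∈ E_k} is nonempty, and set P = P₁ + P₂ (Minkowski sum). For disjoint I, J ⊆ N with |I| = |J| and for k = 1, 2, define λ(I,J;G_k) ∈ ℝ ∪ {+∞} as the infimum of Σ_{(i,j)∈E_k} γ⁽ᵏ⁾_{ij} ξ_{ij} over all ξ : E_k → ℝ_{≥0} satisfying Σ_{(i,j)∈E_k} ξ_{ij}(χ_j − χ_i) = χ_J − χ_I (with infimum of the empty set equal to +∞). Then for all disjoint I, J ⊆ N with |I| = |J|: sup{x(J)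 − x(I) : x ∈ P} = λ(I,J;G₁) + λ(I,J;G₂), as an equality in ℝ ∪ {+∞}. -/
open Pointwise

open Matrix

private lemma sum_dot {ι δ : Type*} [Fintype ι] (S : Finset δ)
    (g : δ → ι → ℝ) (x : ι → ℝ) :
    (∑ d ∈ S, g d) ⬝ᵥ x = ∑ d ∈ S, g d ⬝ᵥ x := by
  simp only [dotProduct, Finset.sum_apply, Finset.sum_mul]
  exact Finset.sum_comm

private lemma farkas {ι δ : Type*} [Fintype ι] [DecidableEq δ]
    (S : Finset δ) (g : δ → ι → ℝ) (b : ι → ℝ) :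
    (∃ ξ : δ → ℝ, (∀ d, 0 ≤ ξ d) ∧ ∑ d ∈ S, ξ d • g d = b) ∨
    (∃ x : ι → ℝ, (∀ d ∈ S, g d ⬝ᵥ x ≤ 0) ∧ 0 < b ⬝ᵥ x) := by
  induction S using Finset.induction_on generalizing g b with
  | empty =>
    by_cases hb : b = 0
    · exact Or.inl ⟨0, fun d => le_refl 0, by simp [hb]⟩
    · refine Or.inr ⟨b, by simp, ?_⟩
      have h := dotProduct_self_eq_zero (v := b)
      have hnn : 0 ≤ b ⬝ᵥ b := Finset.sum_nonneg fun i _ => mul_self_nonneg _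
      rcases hnn.eq_or_lt with h0 | h0
      · exact absurd (h.1 h0.symm) hb
      · exact h0
  | @insert d₀ S' hd₀ ih =>
    rcases ih g b with ⟨ξ, hξ, hsum⟩ | ⟨x, hx, hbx⟩
    · left
      refine ⟨Function.update ξ d₀ 0, ?_, ?_⟩
      · intro d
        rcases eq_or_ne d d₀ with rfl | h
        · simp
        · rw [Function.update_of_ne h]; exact hξ d
      · rw [Finset.sum_insert hd₀, Function.update_self, zero_smul, zero_add,
          Finset.sum_congr rfl
            (fun d hd => by rw [Function.update_of_ne (ne_of_mem_of_not_mem hd hd₀)])]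
        exact hsum
    · by_cases hgd : g d₀ ⬝ᵥ x ≤ 0
      · refine Or.inr ⟨x, fun d hd => ?_, hbx⟩
        rcases Finset.mem_insert.1 hd with rfl | hd
        · exact hgd
        · exact hx d hd
      · push_neg at hgd
        have hp0 : 0 < g d₀ ⬝ᵥ x := hgd
        set p : ℝ := g d₀ ⬝ᵥ x with hp
        rcases ih (fun d => g d - ((g d ⬝ᵥ x) / p) • g d₀)
            (b - ((b ⬝ᵥ x) / p) • g d₀) with ⟨ξ, hξ, hsum⟩ | ⟨y, hy, hby⟩
        · left
          set μ : ℝ := (b ⬝ᵥ x) / p - ∑ d ∈ S', ξ d * ((g d ⬝ᵥ x) / p) with hμ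
          have hμ0 : 0 ≤ μ := by
            have h1 : 0 < (b ⬝ᵥ x) / p := div_pos hbx hp0
            have h2 : ∑ d ∈ S', ξ d * ((g d ⬝ᵥ x) / p) ≤ 0 :=
              Finset.sum_nonpos fun d hd =>
                mul_nonpos_of_nonneg_of_nonpos (hξ d)
                  (div_nonpos_of_nonpos_of_nonneg (hx d hd) hp0.le)
            rw [hμ]; linarith
          refine ⟨Function.update ξ d₀ μ, ?_, ?_⟩
          · intro d
            rcases eq_or_ne d d₀ with rfl | h
            · simpa using hμ0
            · rw [Function.update_of_ne h]; exact hξ d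
          · rw [Finset.sum_insert hd₀, Function.update_self,
              Finset.sum_congr rfl
                (fun d hd => by rw [Function.update_of_ne (ne_of_mem_of_not_mem hd hd₀)])]
            have expand : ∑ d ∈ S', ξ d • (g d - ((g d ⬝ᵥ x) / p) • g d₀) =
                (∑ d ∈ S', ξ d • g d) -
                  (∑ d ∈ S', ξ d * ((g d ⬝ᵥ x) / p)) • g d₀ := by
              rw [Finset.sum_smul, ← Finset.sum_sub_distrib]
              refine Finset.sum_congr rfl fun d hd => ?_
              rw [smul_sub, smul_smul]
            rw [expand] at hsum
            have : ∑ d ∈ S', ξ d • g d =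
                b - ((b ⬝ᵥ x) / p) • g d₀ + (∑ d ∈ S', ξ d * ((g d ⬝ᵥ x) / p)) • g d₀ := by
              rw [← hsum]; abel
            rw [this, hμ, sub_smul]
            abel
        · right
          refine ⟨y - ((g d₀ ⬝ᵥ y) / p) • x, fun d hd => ?_, ?_⟩
          · rcases Finset.mem_insert.1 hd with rfl | hd
            · rw [dotProduct_sub, dotProduct_smul, smul_eq_mul, ← hp,
                div_mul_cancel₀ _ hp0.ne', sub_self]
            · have h1 := hy d hd
              rw [sub_dotProduct, smul_dotProduct, smul_eq_mul] at h1
              rw [dotProduct_sub, dotProduct_smul, smul_eq_mul]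
              have heq : g d ⬝ᵥ y - (g d₀ ⬝ᵥ y) / p * (g d ⬝ᵥ x) =
                  g d ⬝ᵥ y - (g d ⬝ᵥ x) / p * (g d₀ ⬝ᵥ y) := by ring
              rw [heq]; exact h1
          · rw [sub_dotProduct, smul_dotProduct, smul_eq_mul] at hby
            rw [dotProduct_sub, dotProduct_smul, smul_eq_mul]
            have heq : b ⬝ᵥ y - (g d₀ ⬝ᵥ y) / p * (b ⬝ᵥ x) =
                b ⬝ᵥ y - (b ⬝ᵥ x) / p * (g d₀ ⬝ᵥ y) := by ring
            rw [heq]; exact hby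

private lemma gale {ι α : Type*} [Fintype ι] [DecidableEq ι] [Fintype α] [DecidableEq α]
    (F : Finset α) (r : α → ι → ℝ) (b : α → ℝ)
    (h : ∀ x : ι → ℝ, ∃ i ∈ F, b i < r i ⬝ᵥ x) :
    ∃ y : α → ℝ, (∀ i, 0 ≤ y i) ∧ (∀ j, ∑ i ∈ F, y i * r i j = 0) ∧
      ∑ i ∈ F, y i * b i < 0 := by
  classical
  set col : ι → α → ℝ := fun j i => if i ∈ F then r i j else 0 with hcol
  set g : (ι ⊕ ι) ⊕ α → α → ℝ :=
    Sum.elim (Sum.elim col fun j => -col j) (fun i => Pi.single i 1) with hg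
  set b' : α → ℝ := fun i => if i ∈ F then b i else 0 with hb'
  have hcoldot : ∀ (j) (y : α → ℝ), col j ⬝ᵥ y = ∑ i ∈ F, r i j * y i := by
    intro j y
    rw [dotProduct]
    rw [Finset.sum_congr rfl fun i (_ : i ∈ Finset.univ) =>
        (by by_cases hi : i ∈ F <;> simp [hcol, hi] :
          col j i * y i = if i ∈ F then r i j * y i else 0),
      Finset.sum_ite_mem, Finset.univ_inter]
  rcases farkas Finset.univ g b' with ⟨ξ, hξ, hsum⟩ | ⟨y₀, hy₀, hb0⟩
  · exfalso
    set x : ι → ℝ := fun j => ξ (Sum.inl (Sum.inl j)) - ξ (Sum.inl (Sum.inr j)) with hx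
    obtain ⟨i, hiF, hlt⟩ := h x
    have hi := congrFun hsum i
    rw [Finset.sum_apply, Fintype.sum_sum_type, Fintype.sum_sum_type] at hi
    have hsingle : ∑ i' : α, (ξ (Sum.inr i') • g (Sum.inr i')) i = ξ (Sum.inr i) := by
      rw [Finset.sum_eq_single i]
      · simp [hg]
      · intro i' _ hne
        simp [hg, Pi.single_apply, hne]
      · simp
    rw [hsingle] at hi
    have h1 : ∑ j : ι, (ξ (Sum.inl (Sum.inl j)) • g (Sum.inl (Sum.inl j))) i =
        ∑ j : ι, ξ (Sum.inl (Sum.inl j)) * r i j := by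
      refine Finset.sum_congr rfl fun j _ => ?_
      simp [hg, hcol, hiF]
    have h2 : ∑ j : ι, (ξ (Sum.inl (Sum.inr j)) • g (Sum.inl (Sum.inr j))) i =
        -∑ j : ι, ξ (Sum.inl (Sum.inr j)) * r i j := by
      rw [← Finset.sum_neg_distrib]
      refine Finset.sum_congr rfl fun j _ => ?_
      simp [hg, hcol, hiF]
    rw [h1, h2, hb'] at hi
    simp only [hiF, if_pos] at hi
    have hrx : r i ⬝ᵥ x = ∑ j : ι, ξ (Sum.inl (Sum.inl j)) * r i j
        - ∑ j : ι, ξ (Sum.inl (Sum.inr j)) * r i j := by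
      rw [dotProduct, ← Finset.sum_sub_distrib]
      refine Finset.sum_congr rfl fun j _ => ?_
      rw [hx]; ring
    have hxi : 0 ≤ ξ (Sum.inr i) := hξ _
    linarith [hi, hlt, hrx]
  · refine ⟨fun i => -y₀ i, ?_, ?_, ?_⟩
    · intro i
      have := hy₀ (Sum.inr i) (Finset.mem_univ _)
      rw [hg] at this
      simp only [Sum.elim_inr, single_dotProduct, one_mul] at this
      dsimp only
      linarith
    · intro j
      dsimp only
      have hle := hy₀ (Sum.inl (Sum.inl j)) (Finset.mem_univ _)
      have hge := hy₀ (Sum.inl (Sum.inr j)) (Finset.mem_univ _)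
      rw [hg] at hle hge
      simp only [Sum.elim_inl, Sum.elim_inr, neg_dotProduct, neg_nonpos] at hle hge
      have h0 : col j ⬝ᵥ y₀ = 0 := le_antisymm hle hge
      rw [hcoldot] at h0
      have : ∑ i ∈ F, -y₀ i * r i j = -∑ i ∈ F, r i j * y₀ i := by
        rw [← Finset.sum_neg_distrib]
        exact Finset.sum_congr rfl fun i _ => by ring
      rw [this, h0, neg_zero]
    · dsimp only
      have : b' ⬝ᵥ y₀ = ∑ i ∈ F, b i * y₀ i := by
        rw [dotProduct]
        rw [Finset.sum_congr rfl fun i (_ : i ∈ Finset.univ) =>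
            (by by_cases hi : i ∈ F <;> simp [hb', hi] :
              b' i * y₀ i = if i ∈ F then b i * y₀ i else 0),
          Finset.sum_ite_mem, Finset.univ_inter]
      rw [this] at hb0
      have heq : ∑ i ∈ F, -y₀ i * b i = -∑ i ∈ F, b i * y₀ i := by
        rw [← Finset.sum_neg_distrib]
        exact Finset.sum_congr rfl fun i _ => by ring
      rw [heq]; linarith



/-- `λ(I,J;G)`: the optimal value (in `ℝ ∪ {+∞}`, with `sInf ∅ = ⊤`) of the
linear program `min Σ_{e ∈ E} γ_e ξ_e` over `ξ ≥ 0` with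
`Σ_{e ∈ E} ξ_e (χ_{e.2} - χ_{e.1}) = χ_J - χ_I`; combinatorially, the minimum
total `γ`-length of `|I|` paths in `G = (N, E)` connecting `I` to `J` and
covering `I` and `J`. -/
noncomputable def lambdaLP {n : ℕ} (E : Finset (Fin n × Fin n))
    (γ : Fin n × Fin n → ℝ) (I J : Finset (Fin n)) : EReal :=
  sInf {v : EReal | ∃ ξ : Fin n × Fin n → ℝ,
    (∀ e, 0 ≤ ξ e) ∧
    (∀ l : Fin n,
      (∑ e ∈ E, ξ e * (((if e.2 = l then 1 else 0) : ℝ) -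
        ((if e.1 = l then 1 else 0) : ℝ))) =
      ((if l ∈ J then 1 else 0) : ℝ) - ((if l ∈ I then 1 else 0) : ℝ)) ∧
    v = ((∑ e ∈ E, γ e * ξ e : ℝ) : EReal)}


private def avec {n : ℕ} (e : Fin n × Fin n) : Fin n → ℝ :=
  fun l => (if e.2 = l then (1 : ℝ) else 0) - (if e.1 = l then 1 else 0)

private def cvec {n : ℕ} (I J : Finset (Fin n)) : Fin n → ℝ :=
  fun l => (if l ∈ J then (1 : ℝ) else 0) - (if l ∈ I then 1 else 0)

private lemma avec_dot {n : ℕ} (e : Fin n × Fin n) (x : Fin n → ℝ) :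
    avec e ⬝ᵥ x = x e.2 - x e.1 := by
  simp [avec, dotProduct, sub_mul, ite_mul, one_mul, zero_mul,
    Finset.sum_sub_distrib, Finset.sum_ite_eq]

private lemma cvec_dot {n : ℕ} (I J : Finset (Fin n)) (x : Fin n → ℝ) :
    cvec I J ⬝ᵥ x = (∑ j ∈ J, x j) - ∑ i ∈ I, x i := by
  simp [cvec, dotProduct, sub_mul, ite_mul, one_mul, zero_mul,
    Finset.sum_sub_distrib, Finset.sum_ite_mem]

private lemma lambdaLP_eq {n : ℕ} (E : Finset (Fin n × Fin n))
    (γ : Fin n × Fin n → ℝ) (I J : Finset (Fin n)) :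
    lambdaLP E γ I J = sInf {v : EReal | ∃ ξ : Fin n × Fin n → ℝ,
      (∀ e, 0 ≤ ξ e) ∧ (∑ e ∈ E, ξ e • avec e = cvec I J) ∧
      v = ((∑ e ∈ E, γ e * ξ e : ℝ) : EReal)} := by
  unfold lambdaLP
  congr 1
  ext v
  constructor <;> rintro ⟨ξ, h0, hc, hv⟩ <;> refine ⟨ξ, h0, ?_, hv⟩
  · funext l
    rw [Finset.sum_apply]
    simpa [avec, cvec] using hc l
  · intro l
    have := congrFun hc l
    rw [Finset.sum_apply] at this
    simpa [avec, cvec] using this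

private lemma weak_duality {n : ℕ} {E : Finset (Fin n × Fin n)}
    {γ : Fin n × Fin n → ℝ} {I J : Finset (Fin n)} {x : Fin n → ℝ}
    (hx : ∀ e ∈ E, x e.2 - x e.1 ≤ γ e) {ξ : Fin n × Fin n → ℝ}
    (h0 : ∀ e, 0 ≤ ξ e) (hc : ∑ e ∈ E, ξ e • avec e = cvec I J) :
    cvec I J ⬝ᵥ x ≤ ∑ e ∈ E, γ e * ξ e := by
  have h1 : cvec I J ⬝ᵥ x = ∑ e ∈ E, ξ e * (avec e ⬝ᵥ x) := by
    rw [← hc, sum_dot]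
    exact Finset.sum_congr rfl fun e _ => by rw [smul_dotProduct, smul_eq_mul]
  have h2 : ∑ e ∈ E, ξ e * (avec e ⬝ᵥ x) ≤ ∑ e ∈ E, ξ e * γ e :=
    Finset.sum_le_sum fun e he =>
      mul_le_mul_of_nonneg_left ((avec_dot e x) ▸ hx e he) (h0 e)
  rw [h1]
  exact h2.trans (le_of_eq (Finset.sum_congr rfl fun e _ => mul_comm _ _))

/-- any primal objective value is a lower bound on lambda -/
private lemma coe_obj_le_lambda {n : ℕ} {E : Finset (Fin n × Fin n)}
    {γ : Fin n × Fin n → ℝ} {I J : Finset (Fin n)} {x : Fin n → ℝ}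
    (hx : ∀ e ∈ E, x e.2 - x e.1 ≤ γ e) :
    ((cvec I J ⬝ᵥ x : ℝ) : EReal) ≤ lambdaLP E γ I J := by
  rw [lambdaLP_eq]
  refine le_sInf ?_
  rintro v ⟨ξ, h0, hc, rfl⟩
  exact EReal.coe_le_coe_iff.2 (weak_duality hx h0 hc)

private lemma lambda_top {n : ℕ} {E : Finset (Fin n × Fin n)}
    {γ : Fin n × Fin n → ℝ} {I J : Finset (Fin n)}
    (hinf : ¬ ∃ ξ : Fin n × Fin n → ℝ,
      (∀ e, 0 ≤ ξ e) ∧ ∑ e ∈ E, ξ e • avec e = cvec I J) :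
    lambdaLP E γ I J = ⊤ := by
  rw [lambdaLP_eq]
  refine (congrArg sInf (?_ : _ = (∅ : Set EReal))).trans sInf_empty
  ext v
  simp only [Set.mem_setOf_eq, Set.mem_empty_iff_false, iff_false]
  rintro ⟨ξ, h0, hc, -⟩
  exact hinf ⟨ξ, h0, hc⟩

private lemma lambda_le {n : ℕ} {E : Finset (Fin n × Fin n)}
    {γ : Fin n × Fin n → ℝ} {I J : Finset (Fin n)} {ξ : Fin n × Fin n → ℝ}
    (h0 : ∀ e, 0 ≤ ξ e) (hc : ∑ e ∈ E, ξ e • avec e = cvec I J) :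
    lambdaLP E γ I J ≤ ((∑ e ∈ E, γ e * ξ e : ℝ) : EReal) := by
  rw [lambdaLP_eq]
  exact sInf_le ⟨ξ, h0, hc, rfl⟩

/-- strong duality, existence direction -/
private lemma exists_primal {n : ℕ} {E : Finset (Fin n × Fin n)}
    {γ : Fin n × Fin n → ℝ} {I J : Finset (Fin n)}
    (hne : ∃ y₀ : Fin n → ℝ, ∀ e ∈ E, y₀ e.2 - y₀ e.1 ≤ γ e)
    (hfeas : ∃ ξ : Fin n × Fin n → ℝ,
      (∀ e, 0 ≤ ξ e) ∧ ∑ e ∈ E, ξ e • avec e = cvec I J)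
    {t : ℝ} (ht : (t : EReal) < lambdaLP E γ I J) :
    ∃ x : Fin n → ℝ, (∀ e ∈ E, x e.2 - x e.1 ≤ γ e) ∧ t ≤ cvec I J ⬝ᵥ x := by
  classical
  by_contra hno
  push_neg at hno
  obtain ⟨ξ₀, hξ₀0, hξ₀c⟩ := hfeas
  set rr : Option (Fin n × Fin n) → Fin n → ℝ :=
    fun o => o.elim (-(cvec I J)) avec with hrr
  set bb : Option (Fin n × Fin n) → ℝ := fun o => o.elim (-t) γ with hbb
  set F : Finset (Option (Fin n × Fin n)) :=
    insert none (E.image Option.some) with hF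
  have hnone : none ∉ E.image Option.some := by simp
  have h : ∀ x : Fin n → ℝ, ∃ i ∈ F, bb i < rr i ⬝ᵥ x := by
    intro x
    by_cases hxP : ∀ e ∈ E, x e.2 - x e.1 ≤ γ e
    · refine ⟨none, Finset.mem_insert_self _ _, ?_⟩
      have := hno x hxP
      simp only [hrr, hbb, Option.elim, neg_dotProduct]
      linarith
    · push_neg at hxP
      obtain ⟨e, heE, hlt⟩ := hxP
      refine ⟨some e, Finset.mem_insert_of_mem (Finset.mem_image_of_mem _ heE), ?_⟩
      simp only [hrr, hbb, Option.elim]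
      rw [avec_dot]
      exact hlt
  obtain ⟨y, hy0, hycol, hyval⟩ := gale F rr bb h
  set μ : ℝ := y none with hμdef
  set w : Fin n × Fin n → ℝ := fun e => y (some e) with hwdef
  have hμ0 : 0 ≤ μ := hy0 none
  have hw0 : ∀ e, 0 ≤ w e := fun e => hy0 (some e)
  have hsum_ins : ∀ f : Option (Fin n × Fin n) → ℝ,
      ∑ i ∈ F, f i = f none + ∑ e ∈ E, f (some e) := by
    intro f
    rw [hF, Finset.sum_insert hnone, Finset.sum_image (fun a _ b _ h => Option.some_injective _ h)]
  have hcol : ∀ j, ∑ e ∈ E, w e * avec e j = μ * cvec I J j := by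
    intro j
    have := hycol j
    rw [hsum_ins] at this
    simp only [hrr, Option.elim, Pi.neg_apply, mul_neg] at this
    linarith [this]
  have hval : ∑ e ∈ E, w e * γ e < μ * t := by
    have := hyval
    rw [hsum_ins] at this
    simp only [hbb, Option.elim, mul_neg] at this
    linarith [this]
  obtain ⟨y₀, hy₀⟩ := hne
  rcases eq_or_lt_of_le hμ0 with hμz | hμpos
  · -- μ = 0 : dual value unbounded below, contradicting weak duality
    have hzero : ∀ j, ∑ e ∈ E, w e * avec e j = 0 := by
      intro j; rw [hcol j, ← hμz, zero_mul]
    have hW : ∑ e ∈ E, γ e * w e < 0 := by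
      have : ∑ e ∈ E, w e * γ e < 0 := by rw [← hμz, zero_mul] at hval; exact hval
      calc ∑ e ∈ E, γ e * w e = ∑ e ∈ E, w e * γ e :=
            Finset.sum_congr rfl fun e _ => mul_comm _ _
        _ < 0 := this
    set W : ℝ := ∑ e ∈ E, γ e * w e with hWdef
    set V₀ : ℝ := ∑ e ∈ E, γ e * ξ₀ e with hV₀def
    set s : ℝ := ((V₀ - t + 1) / (-W)) ⊔ 0 with hsdef
    have hs0 : 0 ≤ s := le_max_right _ _
    have hfeas' : (∀ e, 0 ≤ ξ₀ e + s * w e) ∧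
        ∑ e ∈ E, (ξ₀ e + s * w e) • avec e = cvec I J := by
      constructor
      · intro e
        have := mul_nonneg hs0 (hw0 e)
        linarith [hξ₀0 e]
      · funext j
        rw [Finset.sum_apply]
        have h1 : ∀ e ∈ E, ((ξ₀ e + s * w e) • avec e) j
            = ξ₀ e * avec e j + s * (w e * avec e j) := by
          intro e _
          simp [Pi.smul_apply, smul_eq_mul]; ring
        rw [Finset.sum_congr rfl h1, Finset.sum_add_distrib, ← Finset.mul_sum, hzero j,
          mul_zero, add_zero]
        have := congrFun hξ₀c j
        rw [Finset.sum_apply] at this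
        simpa [Pi.smul_apply, smul_eq_mul] using this
    have hvless : ∑ e ∈ E, γ e * (ξ₀ e + s * w e) < t := by
      have hexp : ∑ e ∈ E, γ e * (ξ₀ e + s * w e) = V₀ + s * W := by
        rw [hV₀def, hWdef, Finset.mul_sum, ← Finset.sum_add_distrib]
        exact Finset.sum_congr rfl fun e _ => by ring
      rw [hexp]
      have hsge : (V₀ - t + 1) / (-W) ≤ s := le_max_left _ _
      have hWneg : W < 0 := hW
      have : s * W ≤ ((V₀ - t + 1) / (-W)) * W :=
        mul_le_mul_of_nonpos_right hsge hWneg.le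
      have hcalc : ((V₀ - t + 1) / (-W)) * W = -(V₀ - t + 1) := by
        rw [div_mul_eq_mul_div, div_neg, mul_div_cancel_right₀ _ hWneg.ne]
      linarith [this, hcalc ▸ this]
    have := lambda_le (E := E) (γ := γ) hfeas'.1 hfeas'.2
    have h2 : lambdaLP E γ I J ≤ ((t : ℝ) : EReal) :=
      le_trans this (EReal.coe_le_coe_iff.2 hvless.le)
    exact absurd (lt_of_lt_of_le ht h2) (lt_irrefl _)
  · -- μ > 0
    set ξ : Fin n × Fin n → ℝ := fun e => μ⁻¹ * w e with hξdef
    have hξ0 : ∀ e, 0 ≤ ξ e := fun e => mul_nonneg (inv_nonneg.2 hμ0) (hw0 e)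
    have hξc : ∑ e ∈ E, ξ e • avec e = cvec I J := by
      funext j
      rw [Finset.sum_apply]
      have h1 : ∀ e ∈ E, (ξ e • avec e) j = μ⁻¹ * (w e * avec e j) := by
        intro e _
        simp [hξdef, Pi.smul_apply, smul_eq_mul]; ring
      rw [Finset.sum_congr rfl h1, ← Finset.mul_sum, hcol j, ← mul_assoc,
        inv_mul_cancel₀ hμpos.ne', one_mul]
    have hvless : ∑ e ∈ E, γ e * ξ e < t := by
      have hexp : ∑ e ∈ E, γ e * ξ e = μ⁻¹ * ∑ e ∈ E, w e * γ e := by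
        rw [Finset.mul_sum]
        exact Finset.sum_congr rfl fun e _ => by simp [hξdef]; ring
      rw [hexp]
      have := (mul_lt_mul_of_pos_left hval (inv_pos.2 hμpos))
      rwa [← mul_assoc, inv_mul_cancel₀ hμpos.ne', one_mul] at this
    have := lambda_le (E := E) (γ := γ) hξ0 hξc
    have h2 : lambdaLP E γ I J ≤ ((t : ℝ) : EReal) :=
      le_trans this (EReal.coe_le_coe_iff.2 hvless.le)
    exact absurd (lt_of_lt_of_le ht h2) (lt_irrefl _)

/-- If one factor contains a ray improving the objective, the sup is ⊤. -/
private lemma sup_top_of_ray {n : ℕ} (P₁ P₂ : Set (Fin n → ℝ)) (I J : Finset (Fin n))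
    (y₁ : Fin n → ℝ) (hy₁ : y₁ ∈ P₁) (y₂ : Fin n → ℝ) (hy₂ : y₂ ∈ P₂)
    (d : Fin n → ℝ) (hray : ∀ s : ℝ, 0 ≤ s → y₁ + s • d ∈ P₁)
    (hd : 0 < cvec I J ⬝ᵥ d) :
    sSup {v : EReal | ∃ x ∈ P₁ + P₂,
        v = (((∑ j ∈ J, x j) - ∑ i ∈ I, x i : ℝ) : EReal)} = ⊤ := by
  rw [sSup_eq_top]
  intro b hb
  obtain ⟨M, hbM, -⟩ := EReal.exists_between_coe_real hb
  set base : ℝ := cvec I J ⬝ᵥ (y₁ + y₂) with hbase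
  set s : ℝ := ((M + 1 - base) / (cvec I J ⬝ᵥ d)) ⊔ 0 with hs
  have hs0 : 0 ≤ s := le_max_right _ _
  set x : Fin n → ℝ := (y₁ + s • d) + y₂ with hx
  refine ⟨((∑ j ∈ J, x j) - ∑ i ∈ I, x i : ℝ), ⟨x, Set.add_mem_add (hray s hs0) hy₂, rfl⟩, ?_⟩
  have hval : cvec I J ⬝ᵥ x = base + s * (cvec I J ⬝ᵥ d) := by
    rw [hx, hbase, dotProduct_add, dotProduct_add, dotProduct_add, dotProduct_smul,
      smul_eq_mul]
    ring
  have hsge : (M + 1 - base) / (cvec I J ⬝ᵥ d) ≤ s := le_max_left _ _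
  have h1 : M + 1 - base ≤ s * (cvec I J ⬝ᵥ d) := by
    rw [div_le_iff₀ hd] at hsge
    linarith
  have hMv : M < cvec I J ⬝ᵥ x := by rw [hval]; linarith
  calc b < (M : EReal) := hbM
    _ ≤ (((∑ j ∈ J, x j) - ∑ i ∈ I, x i : ℝ) : EReal) := by
        rw [← cvec_dot]
        exact EReal.coe_le_coe_iff.2 hMv.le

/-- For `P = P₁ + P₂` with each `P_k = {y : y_j - y_i ≤ γ^{(k)}_{ij}, (i,j) ∈ E_k}`
nonempty, and disjoint `I, J` with `|I| = |J|`: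
`sup {x(J) - x(I) : x ∈ P} = λ(I,J;G₁) + λ(I,J;G₂)` in `ℝ ∪ {+∞}`. -/
theorem sup_over_L2_sum_eq_lambda_add_lambda {n : ℕ}
    (E₁ E₂ : Finset (Fin n × Fin n))
    (hE₁ : ∀ e ∈ E₁, e.1 ≠ e.2) (hE₂ : ∀ e ∈ E₂, e.1 ≠ e.2)
    (γ₁ γ₂ : Fin n × Fin n → ℝ)
    (P₁ P₂ : Set (Fin n → ℝ))
    (hP₁ : P₁ = {y : Fin n → ℝ | ∀ e ∈ E₁, y e.2 - y e.1 ≤ γ₁ e})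
    (hP₂ : P₂ = {y : Fin n → ℝ | ∀ e ∈ E₂, y e.2 - y e.1 ≤ γ₂ e})
    (hne₁ : P₁.Nonempty) (hne₂ : P₂.Nonempty)
    (I J : Finset (Fin n)) (hIJ : Disjoint I J) (hcard : I.card = J.card) :
    sSup {v : EReal | ∃ x ∈ P₁ + P₂,
        v = (((∑ j ∈ J, x j) - ∑ i ∈ I, x i : ℝ) : EReal)} =
      lambdaLP E₁ γ₁ I J + lambdaLP E₂ γ₂ I J := by
  classical
  obtain ⟨y₁, hy₁⟩ := hne₁
  obtain ⟨y₂, hy₂⟩ := hne₂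
  have hy₁' : ∀ e ∈ E₁, y₁ e.2 - y₁ e.1 ≤ γ₁ e := by rw [hP₁] at hy₁; exact hy₁
  have hy₂' : ∀ e ∈ E₂, y₂ e.2 - y₂ e.1 ≤ γ₂ e := by rw [hP₂] at hy₂; exact hy₂
  -- lambdas are never ⊥
  have hnb₁ : lambdaLP E₁ γ₁ I J ≠ ⊥ :=
    fun h => absurd (h ▸ coe_obj_le_lambda hy₁') (by simp)
  have hnb₂ : lambdaLP E₂ γ₂ I J ≠ ⊥ :=
    fun h => absurd (h ▸ coe_obj_le_lambda hy₂') (by simp)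
  -- ray construction for an infeasible factor
  have ray₁ : (¬ ∃ ξ : Fin n × Fin n → ℝ,
      (∀ e, 0 ≤ ξ e) ∧ ∑ e ∈ E₁, ξ e • avec e = cvec I J) →
      ∃ d : Fin n → ℝ, (∀ s : ℝ, 0 ≤ s → y₁ + s • d ∈ P₁) ∧ 0 < cvec I J ⬝ᵥ d := by
    intro hinf
    obtain ⟨d, hd1, hd2⟩ := (farkas E₁ avec (cvec I J)).resolve_left hinf
    refine ⟨d, fun s hs => ?_, hd2⟩
    rw [hP₁]
    intro e he
    have h1 : (y₁ + s • d) e.2 - (y₁ + s • d) e.1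
        = (y₁ e.2 - y₁ e.1) + s * (d e.2 - d e.1) := by
      simp [Pi.add_apply, Pi.smul_apply, smul_eq_mul]; ring
    rw [h1]
    have := mul_nonpos_of_nonneg_of_nonpos hs (hd1 e he)
    rw [avec_dot e d] at this
    linarith [hy₁' e he]
  have ray₂ : (¬ ∃ ξ : Fin n × Fin n → ℝ,
      (∀ e, 0 ≤ ξ e) ∧ ∑ e ∈ E₂, ξ e • avec e = cvec I J) →
      ∃ d : Fin n → ℝ, (∀ s : ℝ, 0 ≤ s → y₂ + s • d ∈ P₂) ∧ 0 < cvec I J ⬝ᵥ d := by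
    intro hinf
    obtain ⟨d, hd1, hd2⟩ := (farkas E₂ avec (cvec I J)).resolve_left hinf
    refine ⟨d, fun s hs => ?_, hd2⟩
    rw [hP₂]
    intro e he
    have h1 : (y₂ + s • d) e.2 - (y₂ + s • d) e.1
        = (y₂ e.2 - y₂ e.1) + s * (d e.2 - d e.1) := by
      simp [Pi.add_apply, Pi.smul_apply, smul_eq_mul]; ring
    rw [h1]
    have := mul_nonpos_of_nonneg_of_nonpos hs (hd1 e he)
    rw [avec_dot e d] at this
    linarith [hy₂' e he]
  by_cases h1 : ∃ ξ : Fin n × Fin n → ℝ,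
      (∀ e, 0 ≤ ξ e) ∧ ∑ e ∈ E₁, ξ e • avec e = cvec I J
  · by_cases h2 : ∃ ξ : Fin n × Fin n → ℝ,
        (∀ e, 0 ≤ ξ e) ∧ ∑ e ∈ E₂, ξ e • avec e = cvec I J
    · -- both feasible: lambdas are real
      have hnt₁ : lambdaLP E₁ γ₁ I J ≠ ⊤ := by
        obtain ⟨ξ, h0, hc⟩ := h1
        exact ne_top_of_le_ne_top (EReal.coe_ne_top _) (lambda_le h0 hc)
      have hnt₂ : lambdaLP E₂ γ₂ I J ≠ ⊤ := by
        obtain ⟨ξ, h0, hc⟩ := h2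
        exact ne_top_of_le_ne_top (EReal.coe_ne_top _) (lambda_le h0 hc)
      obtain ⟨r₁, hr₁⟩ : ∃ r : ℝ, lambdaLP E₁ γ₁ I J = (r : EReal) :=
        ⟨(lambdaLP E₁ γ₁ I J).toReal, (EReal.coe_toReal hnt₁ hnb₁).symm⟩
      obtain ⟨r₂, hr₂⟩ : ∃ r : ℝ, lambdaLP E₂ γ₂ I J = (r : EReal) :=
        ⟨(lambdaLP E₂ γ₂ I J).toReal, (EReal.coe_toReal hnt₂ hnb₂).symm⟩
      rw [hr₁, hr₂, ← EReal.coe_add]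
      have hub₁ : ∀ x ∈ P₁, cvec I J ⬝ᵥ x ≤ r₁ := by
        intro x hx
        rw [hP₁] at hx
        exact EReal.coe_le_coe_iff.1 (hr₁ ▸ coe_obj_le_lambda hx)
      have hub₂ : ∀ x ∈ P₂, cvec I J ⬝ᵥ x ≤ r₂ := by
        intro x hx
        rw [hP₂] at hx
        exact EReal.coe_le_coe_iff.1 (hr₂ ▸ coe_obj_le_lambda hx)
      apply le_antisymm
      · apply sSup_le
        rintro v ⟨x, hx, rfl⟩
        rw [Set.mem_add] at hx
        obtain ⟨x₁, hx₁, x₂, hx₂, rfl⟩ := hx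
        rw [← cvec_dot]
        have : cvec I J ⬝ᵥ (x₁ + x₂) ≤ r₁ + r₂ := by
          rw [dotProduct_add]
          exact add_le_add (hub₁ x₁ hx₁) (hub₂ x₂ hx₂)
        exact EReal.coe_le_coe_iff.2 this
      · by_contra hlt
        push_neg at hlt
        obtain ⟨t, h₁t, h₂t⟩ := EReal.exists_between_coe_real hlt
        have htlt : t < r₁ + r₂ := EReal.coe_lt_coe_iff.1 h₂t
        set δ : ℝ := (r₁ + r₂ - t) / 2 with hδ
        have hδ0 : 0 < δ := by rw [hδ]; linarith
        obtain ⟨x₁, hx₁, hge₁⟩ := exists_primal ⟨y₁, hy₁'⟩ h1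
          (t := r₁ - δ) (by rw [hr₁]; exact_mod_cast (by linarith : r₁ - δ < r₁))
        obtain ⟨x₂, hx₂, hge₂⟩ := exists_primal ⟨y₂, hy₂'⟩ h2
          (t := r₂ - δ) (by rw [hr₂]; exact_mod_cast (by linarith : r₂ - δ < r₂))
        have hx₁P : x₁ ∈ P₁ := by rw [hP₁]; exact hx₁
        have hx₂P : x₂ ∈ P₂ := by rw [hP₂]; exact hx₂
        have hmem : (((∑ j ∈ J, (x₁ + x₂) j) - ∑ i ∈ I, (x₁ + x₂) i : ℝ) : EReal) ∈
            {v : EReal | ∃ x ∈ P₁ + P₂,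
              v = (((∑ j ∈ J, x j) - ∑ i ∈ I, x i : ℝ) : EReal)} :=
          ⟨x₁ + x₂, Set.add_mem_add hx₁P hx₂P, rfl⟩
        have hobj : t ≤ (∑ j ∈ J, (x₁ + x₂) j) - ∑ i ∈ I, (x₁ + x₂) i := by
          rw [← cvec_dot, dotProduct_add]
          have := add_le_add hge₁ hge₂
          rw [hδ] at this
          linarith
        have := le_trans (EReal.coe_le_coe_iff.2 hobj) (le_sSup hmem)
        exact absurd (lt_of_le_of_lt this h₁t) (lt_irrefl _)
    · -- second infeasible
      obtain ⟨d, hray, hd⟩ := ray₂ h2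
      have hcomm : P₁ + P₂ = P₂ + P₁ := add_comm _ _
      rw [hcomm, sup_top_of_ray P₂ P₁ I J y₂ hy₂ y₁ hy₁ d hray hd,
        lambda_top h2, EReal.add_top_of_ne_bot hnb₁]
  · -- first infeasible
    rw [sup_top_of_ray P₁ P₂ I J y₁ hy₁ y₂ hy₂
        ((ray₁ h1).choose) ((ray₁ h1).choose_spec.1) ((ray₁ h1).choose_spec.2),
      lambda_top h1, EReal.top_add_of_ne_bot hnb₂]
end
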